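/- arXiv:1204.6645 — 2 statements merged into one kernel-verified Lean document; each statement's English description precedes it below -/
import Mathlib

section
/- Let G be a weighted graph with finite nonempty vertex subsets X₀, X₁, …, X_m (m ≥ 1) and 0 < ε < 1. Suppose for each i = 1, …, m the pair (X_{i−1}, X_i)_G satisfies DISC_≥(q_i, p_i, ε) with 0 ≤ q_i ≤ p_i ≤ 1. Then the weighted bipartite graph G' on X₀ × X_m defined by G'(x₀, x_m) = E_{x₁,…,x_{m−1}}[G(x₀,x₁)G(x₁,x₂)⋯G(x_{m−1},x_m)] satisfies DISC_≥(q₁q₂⋯q_m, p₁p₂⋯p_m, 36 ε^{1/(2m)}). -/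
/-- The one-sided discrepancy condition `DISC_≥(q, p, ε)` for a weighted bipartite graph,
between the vertex subsets `A` and `B`. -/
def DISCge {V : Type*} (A B : Finset V) (K : V → V → ℝ) (q p ε : ℝ) : Prop :=
  ∀ u v : V → ℝ, (∀ x, 0 ≤ u x ∧ u x ≤ 1) → (∀ y, 0 ≤ v y ∧ v y ≤ 1) →
    -(ε * p) ≤ (∑ x ∈ A, ∑ y ∈ B, (K x y - q) * u x * v y) /
        ((A.card : ℝ) * (B.card : ℝ))

namespace DiscAux

open Finset Fintype

variable {V : Type*}

/-- monotonicity in ε -/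
lemma DISCge_mono {A B : Finset V} {K : V → V → ℝ} {q p ε₁ ε₂ : ℝ} (hp : 0 ≤ p)
    (hε : ε₁ ≤ ε₂) (h : DISCge A B K q p ε₁) : DISCge A B K q p ε₂ := by
  intro u v hu hv
  have := h u v hu hv
  have : -(ε₂ * p) ≤ -(ε₁ * p) := by nlinarith
  linarith [h u v hu hv]

/-- trivial DISC when ε ≥ 1 -/
lemma DISCge_trivial {A B : Finset V} {K : V → V → ℝ} {q p ε : ℝ}
    (hK : ∀ x y, 0 ≤ K x y) (hq : 0 ≤ q) (hqp : q ≤ p) (hε : 1 ≤ ε) :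
    DISCge A B K q p ε := by
  intro u v hu hv
  have hterm : ∀ x ∈ A, ∀ y ∈ B, -q ≤ (K x y - q) * u x * v y := by
    intro x _ y _
    have h1 := (hu x).1; have h2 := (hu x).2; have h3 := (hv y).1; have h4 := (hv y).2
    have hK' := hK x y
    rcases le_or_gt 0 (K x y - q) with h | h
    · nlinarith [mul_nonneg (mul_nonneg h h1) h3]
    · nlinarith [mul_nonneg h1 h3, mul_le_one₀ h2 h3 h4]
  have hsum : -(q * (A.card * B.card)) ≤ ∑ x ∈ A, ∑ y ∈ B, (K x y - q) * u x * v y := by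
    calc -(q * (A.card * B.card)) = ∑ x ∈ A, ∑ y ∈ B, (-q) := by
          simp [Finset.sum_const, nsmul_eq_mul]; ring
      _ ≤ _ := Finset.sum_le_sum fun x hx => Finset.sum_le_sum fun y hy => hterm x hx y hy
  have hp : 0 ≤ p := le_trans hq hqp
  rcases Nat.eq_zero_or_pos (A.card * B.card) with h0 | h0
  · have h0' : (A.card : ℝ) * B.card = 0 := by exact_mod_cast congrArg (Nat.cast : ℕ → ℝ) h0
    rw [h0', div_zero]
    nlinarith [mul_nonneg (zero_le_one.trans hε) hp]
  · have hab : (0:ℝ) < (A.card : ℝ) * B.card := by exact_mod_cast h0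
    rw [le_div_iff₀ hab]
    calc -(ε * p) * ((A.card:ℝ) * B.card) ≤ -(q) * ((A.card:ℝ) * B.card) := by
          nlinarith [mul_nonneg (sub_nonneg.2 hε) hp]
      _ = -(q * ((A.card:ℝ) * B.card)) := by ring
      _ ≤ _ := hsum

/-- pure arithmetic endgame -/
lemma arith (α β p₁ p₂ ε₁ s Bc ST SB : ℝ)
    (hα : 0 ≤ α) (hαp : α ≤ p₁) (hβ : 0 ≤ β) (hβp : β ≤ p₂) (hp₂ : p₂ ≤ 1)
    (hs0 : 0 < s) (hε₁ : 0 ≤ ε₁) (hBc : 0 < Bc) (hbt : s * p₂ < β)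
    (hfT : α * Bc - α * (s * Bc) - ε₁ * p₁ * Bc ≤ ST) (hTf0 : 0 ≤ ST)
    (hfgT : (β - s * p₂) * ST ≤ SB) (hSB : 0 ≤ SB) :
    (α * β - (ε₁ + 2 * s) * (p₁ * p₂)) * Bc ≤ SB := by
  have hp₁0 : 0 ≤ p₁ := hα.trans hαp
  have hp₂0 : 0 ≤ p₂ := hβ.trans hβp
  set L := α - α * s - ε₁ * p₁ with hL
  by_cases hLs : L ≤ 0
  · have e1 : α * β ≤ (α * s + ε₁ * p₁) * β :=
      mul_le_mul_of_nonneg_right (by rw [hL] at hLs; linarith) hβ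
    have e2 : (α * s + ε₁ * p₁) * β ≤ (α * s + ε₁ * p₁) * p₂ :=
      mul_le_mul_of_nonneg_left hβp
        (add_nonneg (mul_nonneg hα hs0.le) (mul_nonneg hε₁ hp₁0))
    have e3 : (α * s + ε₁ * p₁) * p₂ ≤ (p₁ * s + ε₁ * p₁) * p₂ :=
      mul_le_mul_of_nonneg_right (by linarith [mul_le_mul_of_nonneg_right hαp hs0.le]) hp₂0
    have e4 : (p₁ * s + ε₁ * p₁) * p₂ ≤ (ε₁ + 2 * s) * (p₁ * p₂) := by
      nlinarith [mul_nonneg (mul_nonneg hs0.le hp₁0) hp₂0]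
    have h : α * β - (ε₁ + 2 * s) * (p₁ * p₂) ≤ 0 := by linarith
    have := mul_nonpos_of_nonpos_of_nonneg h hBc.le
    linarith
  · push_neg at hLs
    have hbt' : 0 < β - s * p₂ := by linarith
    have hLα : L ≤ α := by
      rw [hL]
      nlinarith [mul_nonneg hα hs0.le, mul_nonneg hε₁ hp₁0]
    have step : (β - s * p₂) * (L * Bc) ≤ SB := by
      refine le_trans (mul_le_mul_of_nonneg_left ?_ hbt'.le) hfgT
      calc L * Bc = α * Bc - α * (s * Bc) - ε₁ * p₁ * Bc := by rw [hL]; ring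
        _ ≤ ST := hfT
    have b1 : (α * β) * s ≤ (p₁ * p₂) * s :=
      mul_le_mul_of_nonneg_right (mul_le_mul hαp hβp hβ hp₁0) hs0.le
    have b2 : β * (ε₁ * p₁) ≤ p₂ * (ε₁ * p₁) :=
      mul_le_mul_of_nonneg_right hβp (mul_nonneg hε₁ hp₁0)
    have ht0 : 0 ≤ s * p₂ := mul_nonneg hs0.le hp₂0
    have b3 : (s * p₂) * L ≤ (s * p₂) * p₁ :=
      mul_le_mul_of_nonneg_left (hLα.trans hαp) ht0
    have key : α * β - (ε₁ + 2 * s) * (p₁ * p₂) ≤ (β - s * p₂) * L := by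
      have expand : (β - s * p₂) * L = α * β - (α * β) * s - β * (ε₁ * p₁) - (s * p₂) * L := by
        rw [hL]; ring
      rw [expand]
      linarith
    calc (α * β - (ε₁ + 2 * s) * (p₁ * p₂)) * Bc ≤ ((β - s * p₂) * L) * Bc :=
          mul_le_mul_of_nonneg_right key hBc.le
      _ = (β - s * p₂) * (L * Bc) := by ring
      _ ≤ SB := step

/-- The analytic core lemma. -/
lemma analytic {B : Finset V} (hB : B.Nonempty) (f g : V → ℝ) (α β p₁ p₂ ε₁ ε₂ : ℝ)
    (hf : ∀ b, 0 ≤ f b ∧ f b ≤ 1) (hg : ∀ b, 0 ≤ g b ∧ g b ≤ 1)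
    (hα : 0 ≤ α) (hαp : α ≤ p₁) (hβ : 0 ≤ β) (hβp : β ≤ p₂) (hp₁ : p₁ ≤ 1) (hp₂ : p₂ ≤ 1)
    (hε₁ : 0 ≤ ε₁) (hε₂ : 0 < ε₂)
    (Hf : ∀ w : V → ℝ, (∀ b, 0 ≤ w b ∧ w b ≤ 1) →
      -(ε₁ * p₁) ≤ (∑ b ∈ B, (f b - α) * w b) / (B.card : ℝ))
    (Hg : ∀ w : V → ℝ, (∀ b, 0 ≤ w b ∧ w b ≤ 1) →
      -(ε₂ * p₂) ≤ (∑ b ∈ B, (g b - β) * w b) / (B.card : ℝ)) :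
    α * β - (ε₁ + 2 * Real.sqrt ε₂) * (p₁ * p₂) ≤ (∑ b ∈ B, f b * g b) / (B.card : ℝ) := by
  classical
  set s := Real.sqrt ε₂ with hs
  have hs0 : 0 < s := Real.sqrt_pos.2 hε₂
  have hss : s * s = ε₂ := Real.mul_self_sqrt hε₂.le
  have hp₁0 : 0 ≤ p₁ := le_trans hα hαp
  have hp₂0 : 0 ≤ p₂ := le_trans hβ hβp
  have hcard : (0:ℝ) < (B.card : ℝ) := by exact_mod_cast Finset.card_pos.2 hB
  have hsumfg : 0 ≤ (∑ b ∈ B, f b * g b) / (B.card : ℝ) :=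
    div_nonneg (Finset.sum_nonneg fun b _ => mul_nonneg (hf b).1 (hg b).1) hcard.le
  set t := s * p₂ with ht
  have ht0 : 0 ≤ t := mul_nonneg hs0.le hp₂0
  by_cases hbt : β ≤ t
  · have c1 : α * β ≤ α * t := mul_le_mul_of_nonneg_left hbt hα
    have c2 : α * t ≤ p₁ * t := mul_le_mul_of_nonneg_right hαp ht0
    have c3 : p₁ * t = s * (p₁ * p₂) := by rw [ht]; ring
    have c4 : 0 ≤ (ε₁ + s) * (p₁ * p₂) :=
      mul_nonneg (add_nonneg hε₁ hs0.le) (mul_nonneg hp₁0 hp₂0)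
    have : α * β ≤ (ε₁ + 2 * s) * (p₁ * p₂) := by nlinarith
    linarith
  push_neg at hbt
  have hp₂pos : 0 < p₂ := lt_of_lt_of_le (lt_of_le_of_lt ht0 hbt) hβp
  have htpos : 0 < t := mul_pos hs0 hp₂pos
  -- the set where g is large
  set T := B.filter (fun b => β - t ≤ g b) with hT
  set Tc := B.filter (fun b => ¬ (β - t ≤ g b)) with hTc
  -- bound on the size of Tc
  have hTcs : (Tc.card : ℝ) ≤ s * B.card := by
    have key := Hg (fun b => if β - t ≤ g b then 0 else 1)
      (fun b => by by_cases h : β - t ≤ g b <;> simp [h])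
    have hrw : (∑ b ∈ B, (g b - β) * (if β - t ≤ g b then (0:ℝ) else 1))
        = ∑ b ∈ Tc, (g b - β) := by
      rw [hTc, Finset.sum_filter]
      apply Finset.sum_congr rfl
      intro b _
      by_cases h : β - t ≤ g b <;> simp [h]
    have hle : ∑ b ∈ Tc, (g b - β) ≤ ∑ b ∈ Tc, (-t) := by
      apply Finset.sum_le_sum
      intro b hb
      rw [hTc, Finset.mem_filter] at hb
      linarith [hb.2, le_of_lt (lt_of_not_ge hb.2)]
    rw [hrw] at key
    have key2 : -(ε₂ * p₂) * (B.card : ℝ) ≤ ∑ b ∈ Tc, (g b - β) := (le_div_iff₀ hcard).1 key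
    have hconst : ∑ b ∈ Tc, (-t) = -t * Tc.card := by
      simp [Finset.sum_const, nsmul_eq_mul]; ring
    have h2 : t * (Tc.card : ℝ) ≤ ε₂ * p₂ * B.card := by
      have := le_trans key2 (hle.trans_eq hconst)
      linarith
    have h3 : (s * p₂) * (Tc.card : ℝ) ≤ (s * p₂) * (s * B.card) := by
      calc (s * p₂) * (Tc.card : ℝ) = t * Tc.card := by rw [← ht]
        _ ≤ ε₂ * p₂ * B.card := h2
        _ = (s * p₂) * (s * B.card) := by rw [← hss]; ring
    exact le_of_mul_le_mul_left h3 (mul_pos hs0 hp₂pos)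
  -- lower bound for the sum of f over T
  have hcards : (T.card : ℝ) + Tc.card = B.card := by
    rw [hT, hTc]
    exact_mod_cast Finset.card_filter_add_card_filter_not (s := B)
      (p := fun b => β - t ≤ g b)
  have hfT : α * B.card - α * (s * B.card) - ε₁ * p₁ * B.card ≤ ∑ b ∈ T, f b := by
    have key := Hf (fun b => if β - t ≤ g b then 1 else 0)
      (fun b => by by_cases h : β - t ≤ g b <;> simp [h])
    have hrw : (∑ b ∈ B, (f b - α) * (if β - t ≤ g b then (1:ℝ) else 0))
        = ∑ b ∈ T, (f b - α) := by
      rw [hT, Finset.sum_filter]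
      apply Finset.sum_congr rfl
      intro b _
      by_cases h : β - t ≤ g b <;> simp [h]
    rw [hrw] at key
    have key' : -(ε₁ * p₁) * (B.card : ℝ) ≤ ∑ b ∈ T, (f b - α) := (le_div_iff₀ hcard).1 key
    have hsplit : ∑ b ∈ T, (f b - α) = (∑ b ∈ T, f b) - α * T.card := by
      rw [Finset.sum_sub_distrib]
      simp [Finset.sum_const, nsmul_eq_mul]; ring
    rw [hsplit] at key'
    have hTcard : (B.card : ℝ) - s * B.card ≤ T.card := by linarith [hTcs, hcards]
    nlinarith [key', hTcard, hα]
  -- sum of f g over B at least (β - t) * sum of f over T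
  have hfgT : (β - t) * (∑ b ∈ T, f b) ≤ ∑ b ∈ B, f b * g b := by
    have h1 : ∑ b ∈ T, (β - t) * f b ≤ ∑ b ∈ T, f b * g b := by
      apply Finset.sum_le_sum
      intro b hb
      rw [hT, Finset.mem_filter] at hb
      have := (hf b).1
      nlinarith [hb.2]
    have h2 : ∑ b ∈ T, f b * g b ≤ ∑ b ∈ B, f b * g b := by
      apply Finset.sum_le_sum_of_subset_of_nonneg (Finset.filter_subset _ _)
      intro b hb _
      exact mul_nonneg (hf b).1 (hg b).1
    calc (β - t) * (∑ b ∈ T, f b) = ∑ b ∈ T, (β - t) * f b := by rw [Finset.mul_sum]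
      _ ≤ ∑ b ∈ T, f b * g b := h1
      _ ≤ _ := h2
  have hTf0 : 0 ≤ ∑ b ∈ T, f b := Finset.sum_nonneg fun b _ => (hf b).1
  rw [le_div_iff₀ hcard]
  have hSB : 0 ≤ ∑ b ∈ B, f b * g b :=
    Finset.sum_nonneg fun b _ => mul_nonneg (hf b).1 (hg b).1
  rw [ht] at hbt hfgT
  exact arith α β p₁ p₂ ε₁ s (B.card : ℝ) (∑ b ∈ T, f b) (∑ b ∈ B, f b * g b)
    hα hαp hβ hβp hp₂ hs0 hε₁ hcard hbt hfT hTf0 hfgT hSB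

/-- Composition of one-sided discrepancy along a middle vertex set. -/
lemma comp {A B C : Finset V} (hA : A.Nonempty) (hB : B.Nonempty) (hC : C.Nonempty)
    {K₁ K₂ : V → V → ℝ} (hK₁ : ∀ x y, 0 ≤ K₁ x y ∧ K₁ x y ≤ 1)
    (hK₂ : ∀ x y, 0 ≤ K₂ x y ∧ K₂ x y ≤ 1)
    {q₁ p₁ q₂ p₂ ε₁ ε₂ : ℝ} (hq₁ : 0 ≤ q₁) (hq₁p : q₁ ≤ p₁) (hp₁ : p₁ ≤ 1)
    (hq₂ : 0 ≤ q₂) (hq₂p : q₂ ≤ p₂) (hp₂ : p₂ ≤ 1) (hε₁ : 0 ≤ ε₁) (hε₂ : 0 < ε₂)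
    (h₁ : DISCge A B K₁ q₁ p₁ ε₁) (h₂ : DISCge B C K₂ q₂ p₂ ε₂) :
    DISCge A C (fun x y => (∑ b ∈ B, K₁ x b * K₂ b y) / (B.card : ℝ))
      (q₁ * q₂) (p₁ * p₂) (ε₁ + 2 * Real.sqrt ε₂) := by
  intro u v hu hv
  have ha : (0:ℝ) < A.card := by exact_mod_cast Finset.card_pos.2 hA
  have hb : (0:ℝ) < B.card := by exact_mod_cast Finset.card_pos.2 hB
  have hc : (0:ℝ) < C.card := by exact_mod_cast Finset.card_pos.2 hC
  set f : V → ℝ := fun w => (∑ x ∈ A, K₁ x w * u x) / (A.card : ℝ) with hf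
  set g : V → ℝ := fun w => (∑ y ∈ C, K₂ w y * v y) / (C.card : ℝ) with hg
  set α := q₁ * ((∑ x ∈ A, u x) / (A.card : ℝ)) with hα
  set β := q₂ * ((∑ y ∈ C, v y) / (C.card : ℝ)) with hβ
  have avg01 : ∀ (D : Finset V) (h : (0:ℝ) < D.card) (w : V → ℝ),
      (∀ x, 0 ≤ w x ∧ w x ≤ 1) → 0 ≤ (∑ x ∈ D, w x) / (D.card : ℝ) ∧
        (∑ x ∈ D, w x) / (D.card : ℝ) ≤ 1 := by
    intro D h w hw
    constructor
    · exact div_nonneg (Finset.sum_nonneg fun x _ => (hw x).1) h.le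
    · rw [div_le_one h]
      calc ∑ x ∈ D, w x ≤ ∑ x ∈ D, 1 := Finset.sum_le_sum fun x _ => (hw x).2
        _ = D.card := by simp
  have hf01 : ∀ w, 0 ≤ f w ∧ f w ≤ 1 := by
    intro w
    exact avg01 A ha (fun x => K₁ x w * u x)
      (fun x => ⟨mul_nonneg (hK₁ x w).1 (hu x).1, mul_le_one₀ (hK₁ x w).2 (hu x).1 (hu x).2⟩)
  have hg01 : ∀ w, 0 ≤ g w ∧ g w ≤ 1 := by
    intro w
    exact avg01 C hc (fun y => K₂ w y * v y)
      (fun y => ⟨mul_nonneg (hK₂ w y).1 (hv y).1, mul_le_one₀ (hK₂ w y).2 (hv y).1 (hv y).2⟩)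
  have hu01 := avg01 A ha u hu
  have hv01 := avg01 C hc v hv
  have hα0 : 0 ≤ α := mul_nonneg hq₁ hu01.1
  have hαp : α ≤ p₁ := by
    calc α ≤ q₁ * 1 := mul_le_mul_of_nonneg_left hu01.2 hq₁
      _ = q₁ := mul_one _
      _ ≤ p₁ := hq₁p
  have hβ0 : 0 ≤ β := mul_nonneg hq₂ hv01.1
  have hβp : β ≤ p₂ := by
    calc β ≤ q₂ * 1 := mul_le_mul_of_nonneg_left hv01.2 hq₂
      _ = q₂ := mul_one _
      _ ≤ p₂ := hq₂p
  -- the two DISC facts transferred to f and g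
  have Hf : ∀ w : V → ℝ, (∀ x, 0 ≤ w x ∧ w x ≤ 1) →
      -(ε₁ * p₁) ≤ (∑ x ∈ B, (f x - α) * w x) / (B.card : ℝ) := by
    intro w hw
    have h := h₁ u w hu hw
    have hfb : ∀ x, f x - α = (∑ y ∈ A, (K₁ y x - q₁) * u y) / (A.card : ℝ) := by
      intro x
      rw [hf, hα, mul_div_assoc', ← sub_div]
      congr 1
      simp [sub_mul, Finset.sum_sub_distrib, Finset.mul_sum]
    have e : ∀ x, (f x - α) * w x = (∑ y ∈ A, (K₁ y x - q₁) * u y * w x) / (A.card : ℝ) := by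
      intro x
      rw [hfb x, div_mul_eq_mul_div, Finset.sum_mul]
    have id1 : (∑ x ∈ B, (f x - α) * w x) / (B.card : ℝ)
        = (∑ x ∈ A, ∑ y ∈ B, (K₁ x y - q₁) * u x * w y) / ((A.card : ℝ) * (B.card : ℝ)) := by
      calc (∑ x ∈ B, (f x - α) * w x) / (B.card : ℝ)
          = (∑ x ∈ B, (∑ y ∈ A, (K₁ y x - q₁) * u y * w x) / (A.card : ℝ)) / (B.card : ℝ) := by
            rw [Finset.sum_congr rfl fun x _ => e x]
        _ = (∑ x ∈ B, ∑ y ∈ A, (K₁ y x - q₁) * u y * w x) / ((A.card : ℝ) * (B.card : ℝ)) := by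
            rw [← Finset.sum_div, div_div]
        _ = (∑ x ∈ A, ∑ y ∈ B, (K₁ x y - q₁) * u x * w y) / ((A.card : ℝ) * (B.card : ℝ)) := by
            rw [Finset.sum_comm]
    rw [id1]
    exact h
  have Hg : ∀ w : V → ℝ, (∀ x, 0 ≤ w x ∧ w x ≤ 1) →
      -(ε₂ * p₂) ≤ (∑ x ∈ B, (g x - β) * w x) / (B.card : ℝ) := by
    intro w hw
    have h := h₂ w v hw hv
    have hgb : ∀ x, g x - β = (∑ y ∈ C, (K₂ x y - q₂) * v y) / (C.card : ℝ) := by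
      intro x
      rw [hg, hβ, mul_div_assoc', ← sub_div]
      congr 1
      simp [sub_mul, Finset.sum_sub_distrib, Finset.mul_sum]
    have e : ∀ x, (g x - β) * w x = (∑ y ∈ C, (K₂ x y - q₂) * w x * v y) / (C.card : ℝ) := by
      intro x
      rw [hgb x, div_mul_eq_mul_div, Finset.sum_mul]
      congr 1
      apply Finset.sum_congr rfl
      intro y _
      ring
    have id1 : (∑ x ∈ B, (g x - β) * w x) / (B.card : ℝ)
        = (∑ x ∈ B, ∑ y ∈ C, (K₂ x y - q₂) * w x * v y) / ((B.card : ℝ) * (C.card : ℝ)) := by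
      calc (∑ x ∈ B, (g x - β) * w x) / (B.card : ℝ)
          = (∑ x ∈ B, (∑ y ∈ C, (K₂ x y - q₂) * w x * v y) / (C.card : ℝ)) / (B.card : ℝ) := by
            rw [Finset.sum_congr rfl fun x _ => e x]
        _ = (∑ x ∈ B, ∑ y ∈ C, (K₂ x y - q₂) * w x * v y) / ((C.card : ℝ) * (B.card : ℝ)) := by
            rw [← Finset.sum_div, div_div]
        _ = _ := by rw [mul_comm ((C.card : ℝ)) ((B.card : ℝ))]
    rw [id1]
    exact h
  have key := analytic hB f g α β p₁ p₂ ε₁ ε₂ hf01 hg01 hα0 hαp hβ0 hβp hp₁ hp₂ hε₁ hε₂ Hf Hg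
  -- the exchange identity
  have I0 : ∑ x ∈ A, ∑ y ∈ C, (∑ b ∈ B, K₁ x b * K₂ b y) * (u x * v y)
      = ∑ b ∈ B, (∑ x ∈ A, K₁ x b * u x) * (∑ y ∈ C, K₂ b y * v y) := by
    calc ∑ x ∈ A, ∑ y ∈ C, (∑ b ∈ B, K₁ x b * K₂ b y) * (u x * v y)
        = ∑ x ∈ A, ∑ y ∈ C, ∑ b ∈ B, (K₁ x b * u x) * (K₂ b y * v y) := by
          apply Finset.sum_congr rfl; intro x _
          apply Finset.sum_congr rfl; intro y _
          rw [Finset.sum_mul]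
          apply Finset.sum_congr rfl; intro b _
          ring
      _ = ∑ x ∈ A, ∑ b ∈ B, ∑ y ∈ C, (K₁ x b * u x) * (K₂ b y * v y) := by
          apply Finset.sum_congr rfl; intro x _
          exact Finset.sum_comm
      _ = ∑ b ∈ B, ∑ x ∈ A, ∑ y ∈ C, (K₁ x b * u x) * (K₂ b y * v y) := Finset.sum_comm
      _ = ∑ b ∈ B, (∑ x ∈ A, K₁ x b * u x) * (∑ y ∈ C, K₂ b y * v y) := by
          apply Finset.sum_congr rfl; intro b _
          rw [Finset.sum_mul_sum]
  have hfg : ∀ b, f b * g b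
      = ((∑ x ∈ A, K₁ x b * u x) * (∑ y ∈ C, K₂ b y * v y)) / ((A.card : ℝ) * (C.card : ℝ)) := by
    intro b
    rw [hf, hg, div_mul_div_comm]
  have main : (∑ x ∈ A, ∑ y ∈ C,
        ((∑ b ∈ B, K₁ x b * K₂ b y) / (B.card : ℝ) - q₁ * q₂) * u x * v y) /
          ((A.card : ℝ) * (C.card : ℝ))
      = (∑ b ∈ B, f b * g b) / (B.card : ℝ) - α * β := by
    have euv : ∑ x ∈ A, ∑ y ∈ C, u x * v y = (∑ x ∈ A, u x) * (∑ y ∈ C, v y) :=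
      (Finset.sum_mul_sum A C u v).symm
    have e1 : ∑ x ∈ A, ∑ y ∈ C,
        ((∑ b ∈ B, K₁ x b * K₂ b y) / (B.card : ℝ) - q₁ * q₂) * u x * v y
        = (∑ x ∈ A, ∑ y ∈ C, (∑ b ∈ B, K₁ x b * K₂ b y) * (u x * v y)) / (B.card : ℝ)
          - q₁ * q₂ * ((∑ x ∈ A, u x) * (∑ y ∈ C, v y)) := by
      rw [← euv]
      rw [Finset.sum_div, Finset.mul_sum, ← Finset.sum_sub_distrib]
      apply Finset.sum_congr rfl; intro x _
      rw [Finset.sum_div, Finset.mul_sum, ← Finset.sum_sub_distrib]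
      apply Finset.sum_congr rfl; intro y _
      ring
    have e2 : ∑ b ∈ B, f b * g b
        = (∑ b ∈ B, (∑ x ∈ A, K₁ x b * u x) * (∑ y ∈ C, K₂ b y * v y)) /
            ((A.card : ℝ) * (C.card : ℝ)) := by
      rw [Finset.sum_div]
      exact Finset.sum_congr rfl fun b _ => hfg b
    rw [e1, I0, e2, hα, hβ]
    field_simp
  rw [main]
  linarith [key]

/-- the normalized path kernel -/
noncomputable def pathK (G : V → V → ℝ) (Y : ℕ → Finset V) : ℕ → V → V → ℝ
  | 0 => G
  | (k+1) => fun x y => (∑ b ∈ Y (k+1), pathK G Y k x b * G b y) / ((Y (k+1)).card : ℝ)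

lemma pathK_mem (G : V → V → ℝ) (Y : ℕ → Finset V) (hY : ∀ i, (Y i).Nonempty)
    (hG : ∀ x y, 0 ≤ G x y ∧ G x y ≤ 1) :
    ∀ k x y, 0 ≤ pathK G Y k x y ∧ pathK G Y k x y ≤ 1 := by
  intro k
  induction k with
  | zero => exact hG
  | succ k ih =>
    intro x y
    have hcard : (0:ℝ) < ((Y (k+1)).card : ℝ) := by
      exact_mod_cast Finset.card_pos.2 (hY (k+1))
    constructor
    · exact div_nonneg (Finset.sum_nonneg fun b _ =>
        mul_nonneg (ih x b).1 (hG b y).1) hcard.le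
    · show (∑ b ∈ Y (k+1), pathK G Y k x b * G b y) / ((Y (k+1)).card : ℝ) ≤ 1
      rw [div_le_one hcard]
      calc ∑ b ∈ Y (k+1), pathK G Y k x b * G b y ≤ ∑ b ∈ Y (k+1), 1 :=
            Finset.sum_le_sum fun b _ =>
              mul_le_one₀ (ih x b).2 (hG b y).1 (hG b y).2
        _ = ((Y (k+1)).card : ℝ) := by simp

/-- discrepancy propagates along the path kernel -/
lemma pathK_disc (G : V → V → ℝ) (Y : ℕ → Finset V) (hY : ∀ i, (Y i).Nonempty)
    (hG : ∀ x y, 0 ≤ G x y ∧ G x y ≤ 1) (q p : ℕ → ℝ) {ε : ℝ} (hε : 0 < ε) :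
    ∀ k, (∀ i, i ≤ k → 0 ≤ q i ∧ q i ≤ p i ∧ p i ≤ 1) →
      (∀ i, i ≤ k → DISCge (Y i) (Y (i+1)) G (q i) (p i) ε) →
      DISCge (Y 0) (Y (k+1)) (pathK G Y k)
        (∏ i ∈ Finset.range (k+1), q i) (∏ i ∈ Finset.range (k+1), p i)
        (ε + 2 * (k : ℝ) * Real.sqrt ε) := by
  intro k
  induction k with
  | zero =>
    intro _ hd
    simpa [pathK] using hd 0 le_rfl
  | succ k ih =>
    intro hqp hd
    have hq0 : 0 ≤ ∏ i ∈ Finset.range (k+1), q i :=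
      Finset.prod_nonneg fun i hi => (hqp i (by simp at hi; omega)).1
    have hqlep : ∏ i ∈ Finset.range (k+1), q i ≤ ∏ i ∈ Finset.range (k+1), p i := by
      apply Finset.prod_le_prod
      · intro i hi; exact (hqp i (by simp at hi; omega)).1
      · intro i hi; exact (hqp i (by simp at hi; omega)).2.1
    have hple1 : ∏ i ∈ Finset.range (k+1), p i ≤ 1 := by
      apply Finset.prod_le_one
      · intro i hi
        exact le_trans (hqp i (by simp at hi; omega)).1 (hqp i (by simp at hi; omega)).2.1
      · intro i hi; exact (hqp i (by simp at hi; omega)).2.2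
    have hIH := ih (fun i hi => hqp i (by omega)) (fun i hi => hd i (by omega))
    have hqk := hqp (k+1) le_rfl
    have hcomp := comp (hY 0) (hY (k+1)) (hY (k+2))
      (pathK_mem G Y hY hG k) hG hq0 hqlep hple1 hqk.1 hqk.2.1 hqk.2.2
      (by positivity) hε hIH (hd (k+1) le_rfl)
    have hker : (fun x y => (∑ b ∈ Y (k+1), pathK G Y k x b * G b y) / ((Y (k+1)).card : ℝ))
        = pathK G Y (k+1) := rfl
    rw [hker] at hcomp
    rw [Finset.prod_range_succ q (k+1), Finset.prod_range_succ p (k+1)]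
    have : ε + 2 * (k : ℝ) * Real.sqrt ε + 2 * Real.sqrt ε
        = ε + 2 * (((k+1) : ℕ) : ℝ) * Real.sqrt ε := by
      push_cast; ring
    rw [← this]
    exact hcomp

/-- peel the last coordinate of a sum over a product of finsets -/
lemma sum_piFinset_snoc {n : ℕ} {β : Type*} (S : Fin (n+1) → Finset β)
    (F : (Fin (n+1) → β) → ℝ) :
    ∑ z ∈ Fintype.piFinset S, F z
      = ∑ b ∈ S (Fin.last n), ∑ z ∈ Fintype.piFinset (fun i : Fin n => S i.castSucc),
          F (Fin.snoc z b) := by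
  have key : ∑ z ∈ Fintype.piFinset S, F z
      = ∑ pp ∈ (S (Fin.last n)) ×ˢ Fintype.piFinset (fun i : Fin n => S i.castSucc),
          F (Fin.snoc pp.2 pp.1) := by
    refine Finset.sum_nbij'
      (fun z => ((z (Fin.last n), fun i : Fin n => z i.castSucc) : β × (Fin n → β)))
      (fun pp => Fin.snoc pp.2 pp.1) ?_ ?_ ?_ ?_ ?_
    · intro z hz
      have hz' := Fintype.mem_piFinset.1 hz
      rw [Finset.mem_product]
      exact ⟨hz' _, Fintype.mem_piFinset.2 fun i => hz' _⟩
    · intro pp hp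
      rw [Finset.mem_product] at hp
      apply Fintype.mem_piFinset.2
      intro j
      induction j using Fin.lastCases with
      | last => simpa using hp.1
      | cast i => simpa using Fintype.mem_piFinset.1 hp.2 i
    · intro z _
      exact Fin.snoc_init_self z
    · intro pp _
      ext i
      · simp [Fin.snoc_last]
      · simp [Fin.snoc_castSucc]
    · intro z _
      exact congrArg F (Fin.snoc_init_self z).symm
  rw [key, Finset.sum_product]

/-- the unnormalized path kernel -/
noncomputable def upath (G : V → V → ℝ) (Y : ℕ → Finset V) : ℕ → V → V → ℝ
  | 0 => G
  | (k+1) => fun x y => ∑ b ∈ Y (k+1), upath G Y k x b * G b y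

lemma pathK_eq_upath (G : V → V → ℝ) (Y : ℕ → Finset V) :
    ∀ k x y, pathK G Y k x y
      = upath G Y k x y / ∏ j ∈ Finset.range k, ((Y (j+1)).card : ℝ) := by
  intro k
  induction k with
  | zero => intro x y; simp [pathK, upath]
  | succ k ih =>
    intro x y
    show (∑ b ∈ Y (k+1), pathK G Y k x b * G b y) / ((Y (k+1)).card : ℝ) = _
    rw [Finset.sum_congr rfl (fun b _ => by rw [ih, div_mul_eq_mul_div])]
    rw [← Finset.sum_div, div_div, Finset.prod_range_succ]
    rfl

/-- the pinned-start pi-finset sum computes the unnormalized path kernel -/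
lemma pinned_eq (G : V → V → ℝ) (Y : ℕ → Finset V) (x₀ : V) :
    ∀ n (y : V),
      (∑ z ∈ Fintype.piFinset
          (fun j : Fin (n+1) => if (j : ℕ) = 0 then ({x₀} : Finset V) else Y (j : ℕ)),
        (∏ i : Fin n, G (z i.castSucc) (z i.succ)) * G (z (Fin.last n)) y)
      = upath G Y n x₀ y := by
  intro n
  induction n with
  | zero =>
    intro y
    have hset : (fun j : Fin 1 => if (j : ℕ) = 0 then ({x₀} : Finset V) else Y (j : ℕ))
        = fun _ : Fin 1 => ({x₀} : Finset V) := by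
      funext j
      have : (j : ℕ) = 0 := by omega
      rw [if_pos this]
    rw [hset]
    rw [show (fun _ : Fin 1 => ({x₀} : Finset V)) = (fun i : Fin 1 => {(fun _ => x₀) i}) from rfl,
      Fintype.piFinset_singleton (fun _ : Fin 1 => x₀), Finset.sum_singleton]
    simp [upath]
  | succ n ih =>
    intro y
    rw [sum_piFinset_snoc
      (fun j : Fin (n+2) => if (j : ℕ) = 0 then ({x₀} : Finset V) else Y (j : ℕ))
      (fun z => (∏ i : Fin (n+1), G (z i.castSucc) (z i.succ)) * G (z (Fin.last (n+1))) y)]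
    have hl : ((Fin.last (n+1) : Fin (n+2)) : ℕ) = n+1 := rfl
    rw [show (if ((Fin.last (n+1) : Fin (n+2)) : ℕ) = 0 then ({x₀} : Finset V)
        else Y ((Fin.last (n+1) : Fin (n+2)) : ℕ)) = Y (n+1) by rw [hl]; simp]
    have hfam : (fun i : Fin (n+1) =>
        if ((Fin.castSucc i : Fin (n+2)) : ℕ) = 0 then ({x₀} : Finset V)
          else Y ((Fin.castSucc i : Fin (n+2)) : ℕ))
        = (fun j : Fin (n+1) => if (j : ℕ) = 0 then ({x₀} : Finset V) else Y (j : ℕ)) := by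
      funext j
      rw [Fin.coe_castSucc]
    rw [show upath G Y (n+1) x₀ y = ∑ b ∈ Y (n+1), upath G Y n x₀ b * G b y from rfl]
    apply Finset.sum_congr rfl
    intro b _
    rw [hfam, ← ih b, Finset.sum_mul]
    apply Finset.sum_congr rfl
    intro z _
    simp only [Fin.prod_univ_castSucc, Fin.succ_castSucc, Fin.snoc_castSucc, Fin.succ_last,
      Fin.snoc_last]

/-- numeric bound -/
lemma eps_bound {ε : ℝ} (hε0 : 0 < ε) (hε1 : ε < 1) (n : ℕ)
    (h : 36 * ε ^ (1 / (2 * (((n+1) : ℕ) : ℝ))) < 1) :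
    ε + 2 * n * Real.sqrt ε ≤ 36 * ε ^ (1 / (2 * (((n+1) : ℕ) : ℝ))) := by
  set δ := ε ^ (1 / (2 * (((n+1) : ℕ) : ℝ))) with hδ
  have hδpos : 0 < δ := Real.rpow_pos_of_pos hε0 _
  have hδhalf : δ ≤ 1/2 := by nlinarith
  have hm : (((n+1) : ℕ) : ℝ) ≠ 0 := by positivity
  have hsqrt : Real.sqrt ε = δ ^ (n+1) := by
    rw [hδ, ← Real.rpow_natCast (ε ^ (1 / (2 * (((n+1) : ℕ) : ℝ)))) (n+1),
      ← Real.rpow_mul hε0.le]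
    rw [show (1 / (2 * (((n+1) : ℕ) : ℝ))) * (((n+1) : ℕ) : ℝ) = 1/2 by field_simp]
    rw [Real.sqrt_eq_rpow]
  have hεsq : ε ≤ Real.sqrt ε := by
    nlinarith [Real.sq_sqrt hε0.le, Real.sqrt_nonneg ε]
  have h1 : δ ^ n ≤ (1/2 : ℝ) ^ n := pow_le_pow_left₀ hδpos.le hδhalf n
  have h2 : ((2*n+1 : ℕ) : ℝ) ≤ (2 : ℝ) ^ (n+1) := by
    have hn : (2*n+1 : ℕ) ≤ 2 ^ (n+1) := by
      have := @Nat.lt_two_pow_self n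
      calc 2*n+1 ≤ 2*(n+1) := by omega
        _ ≤ 2 * 2^n := by omega
        _ = 2^(n+1) := by rw [pow_succ]; ring
    exact_mod_cast hn
  have h3 : (2 : ℝ) ^ (n+1) * (1/2 : ℝ) ^ n = 2 := by
    rw [pow_succ]
    rw [show (2:ℝ)^n * 2 * (1/2:ℝ)^n = 2 * ((2:ℝ) * (1/2:ℝ))^n by rw [mul_pow]; ring]
    norm_num
  have h4 : (2*(n:ℝ)+1) * δ ^ n ≤ 2 := by
    have h4' := mul_le_mul h2 h1 (pow_nonneg hδpos.le n) (by positivity)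
    rw [h3] at h4'
    push_cast at h4'
    linarith
  have h5 : (2*(n:ℝ)+1) * Real.sqrt ε = ((2*(n:ℝ)+1) * δ ^ n) * δ := by
    rw [hsqrt, pow_succ]
    ring
  have h6 : ((2*(n:ℝ)+1) * δ ^ n) * δ ≤ 36 * δ := by
    apply mul_le_mul_of_nonneg_right _ hδpos.le
    linarith
  linarith [hεsq, h5, h6, mul_le_mul_of_nonneg_right hεsq (by positivity : (0:ℝ) ≤ 1)]

end DiscAux

open Classical in
theorem stmt_13 {V : Type*} [Fintype V] {m : ℕ} (hm : 1 ≤ m)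
    (X : Fin (m + 1) → Finset V) (hX : ∀ i, (X i).Nonempty)
    (G : V → V → ℝ) (hGsymm : ∀ x y, G x y = G y x) (hG01 : ∀ x y, 0 ≤ G x y ∧ G x y ≤ 1)
    (q p : Fin m → ℝ) (hqp : ∀ i, 0 ≤ q i ∧ q i ≤ p i ∧ p i ≤ 1)
    (ε : ℝ) (hε0 : 0 < ε) (hε1 : ε < 1)
    (hdisc : ∀ i : Fin m, DISCge (X i.castSucc) (X i.succ) G (q i) (p i) ε) :
    DISCge (X 0) (X (Fin.last m))
      (fun x₀ xm =>
        (∑ z ∈ Fintype.piFinset (fun j : Fin (m + 1) =>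
              if j = 0 then {x₀} else if j = Fin.last m then {xm} else X j),
            ∏ i : Fin m, G (z i.castSucc) (z i.succ)) /
          ∏ j : Fin (m + 1),
            (((if j = 0 then ({x₀} : Finset V) else if j = Fin.last m then {xm}
                else X j).card : ℝ)))
      (∏ i : Fin m, q i) (∏ i : Fin m, p i)
      (36 * ε ^ (1 / (2 * (m : ℝ)))) := by
  classical
  obtain ⟨n, rfl⟩ : ∃ n, m = n + 1 := ⟨m - 1, by omega⟩
  set Y : ℕ → Finset V := fun j => if h : j < n + 2 then X ⟨j, h⟩ else X 0 with hY
  have hYne : ∀ i, (Y i).Nonempty := by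
    intro i; rw [hY]; dsimp only; split <;> exact hX _
  set qN : ℕ → ℝ := fun i => if h : i < n + 1 then q ⟨i, h⟩ else 0 with hqN
  set pN : ℕ → ℝ := fun i => if h : i < n + 1 then p ⟨i, h⟩ else 1 with hpN
  have hqNi : ∀ i (h : i < n + 1), qN i = q ⟨i, h⟩ := by
    intro i h; rw [hqN]; dsimp only; rw [dif_pos h]
  have hpNi : ∀ i (h : i < n + 1), pN i = p ⟨i, h⟩ := by
    intro i h; rw [hpN]; dsimp only; rw [dif_pos h]
  have hYi : ∀ i (h : i < n + 2), Y i = X ⟨i, h⟩ := by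
    intro i h; rw [hY]; dsimp only; rw [dif_pos h]
  have hqpN : ∀ i, i ≤ n → 0 ≤ qN i ∧ qN i ≤ pN i ∧ pN i ≤ 1 := by
    intro i hi
    rw [hqNi i (by omega), hpNi i (by omega)]
    exact hqp _
  have hdN : ∀ i, i ≤ n → DISCge (Y i) (Y (i+1)) G (qN i) (pN i) ε := by
    intro i hi
    have h := hdisc ⟨i, by omega⟩
    have e1 : Y i = X (Fin.castSucc ⟨i, by omega⟩) := by
      rw [hYi i (by omega)]
      exact congrArg X (Fin.ext rfl)
    have e2 : Y (i+1) = X (Fin.succ ⟨i, by omega⟩) := by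
      rw [hYi (i+1) (by omega)]
      rfl
    rw [e1, e2, hqNi i (by omega), hpNi i (by omega)]
    exact h
  have main := DiscAux.pathK_disc G Y hYne hG01 qN pN hε0 n hqpN hdN
  -- identify the endpoints
  have hY0 : Y 0 = X 0 := hYi 0 (by omega)
  have hYl : Y (n+1) = X (Fin.last (n+1)) := hYi (n+1) (by omega)
  -- identify the products
  have hprodq : ∏ i ∈ Finset.range (n+1), qN i = ∏ i : Fin (n+1), q i := by
    rw [← Fin.prod_univ_eq_prod_range qN (n+1)]
    exact Finset.prod_congr rfl fun i _ => by rw [hqNi _ i.isLt]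
  have hprodp : ∏ i ∈ Finset.range (n+1), pN i = ∏ i : Fin (n+1), p i := by
    rw [← Fin.prod_univ_eq_prod_range pN (n+1)]
    exact Finset.prod_congr rfl fun i _ => by rw [hpNi _ i.isLt]
  -- identify the kernel
  have hker : (fun x₀ xm =>
        (∑ z ∈ Fintype.piFinset (fun j : Fin (n + 1 + 1) =>
              if j = 0 then {x₀} else if j = Fin.last (n + 1) then {xm} else X j),
            ∏ i : Fin (n + 1), G (z i.castSucc) (z i.succ)) /
          ∏ j : Fin (n + 1 + 1),
            (((if j = 0 then ({x₀} : Finset V) else if j = Fin.last (n + 1) then {xm}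
                else X j).card : ℝ)))
      = DiscAux.pathK G Y n := by
    funext x₀ xm
    have hlast0 : (Fin.last (n+1) : Fin (n+2)) ≠ 0 := by
      simp [Fin.ext_iff]
    -- numerator
    have hnum : (∑ z ∈ Fintype.piFinset (fun j : Fin (n + 1 + 1) =>
          if j = 0 then {x₀} else if j = Fin.last (n + 1) then {xm} else X j),
        ∏ i : Fin (n + 1), G (z i.castSucc) (z i.succ))
        = DiscAux.upath G Y n x₀ xm := by
      rw [DiscAux.sum_piFinset_snoc
        (fun j : Fin (n + 1 + 1) =>
          if j = 0 then ({x₀} : Finset V) else if j = Fin.last (n + 1) then {xm} else X j)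
        (fun z => ∏ i : Fin (n + 1), G (z i.castSucc) (z i.succ))]
      rw [if_neg hlast0, if_pos rfl, Finset.sum_singleton]
      have hfam : (fun i : Fin (n+1) =>
          if (Fin.castSucc i : Fin (n+2)) = 0 then ({x₀} : Finset V)
            else if (Fin.castSucc i : Fin (n+2)) = Fin.last (n+1) then {xm}
            else X (Fin.castSucc i))
          = (fun j : Fin (n+1) => if (j : ℕ) = 0 then ({x₀} : Finset V) else Y (j : ℕ)) := by
        funext j
        by_cases hj : (j : ℕ) = 0
        · rw [if_pos (by simp [Fin.ext_iff, hj]), if_pos hj]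
        · rw [if_neg (by simp [Fin.ext_iff, hj]),
            if_neg (by simp only [Fin.ext_iff, Fin.coe_castSucc, Fin.val_last]; omega),
            if_neg hj, hYi (j : ℕ) (by omega)]
          all_goals exact congrArg X (Fin.ext rfl)
      rw [hfam, ← DiscAux.pinned_eq G Y x₀ n xm]
      apply Finset.sum_congr rfl
      intro z _
      simp only [Fin.prod_univ_castSucc, Fin.succ_castSucc, Fin.snoc_castSucc, Fin.succ_last,
        Fin.snoc_last]
    -- denominator
    have hden : (∏ j : Fin (n + 1 + 1),
          (((if j = 0 then ({x₀} : Finset V) else if j = Fin.last (n + 1) then {xm}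
              else X j).card : ℝ)))
        = ∏ j ∈ Finset.range n, ((Y (j+1)).card : ℝ) := by
      set fN : ℕ → ℝ := fun j => if j = 0 then 1 else if j = n+1 then 1 else ((Y j).card : ℝ)
        with hfN
      have step1 : (∏ j : Fin (n + 1 + 1),
            (((if j = 0 then ({x₀} : Finset V) else if j = Fin.last (n + 1) then {xm}
                else X j).card : ℝ)))
          = ∏ j : Fin (n+2), fN (j : ℕ) := by
        apply Finset.prod_congr rfl
        intro j _
        by_cases hj : j = (0 : Fin (n+2))
        · subst hj
          simp [hfN]
        · by_cases hjl : j = Fin.last (n+1)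
          · subst hjl
            rw [if_neg hj, if_pos rfl]
            simp [hfN, Fin.val_last]
          · rw [if_neg hj, if_neg hjl]
            have hv0 : (j : ℕ) ≠ 0 := fun h => hj (Fin.ext (by simpa using h))
            have hvl : (j : ℕ) ≠ n+1 := by simpa [Fin.ext_iff, Fin.val_last] using hjl
            rw [hfN]
            dsimp only
            rw [if_neg hv0, if_neg hvl, hYi (j : ℕ) (by omega)]
      rw [step1, Fin.prod_univ_eq_prod_range fN (n+2), Finset.prod_range_succ',
        Finset.prod_range_succ]
      rw [show fN 0 = 1 by simp [hfN], show fN (n+1) = 1 by simp [hfN]]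
      rw [mul_one, mul_one]
      apply Finset.prod_congr rfl
      intro j hj
      rw [Finset.mem_range] at hj
      simp only [hfN]
      rw [if_neg (by omega), if_neg (by omega)]
    rw [hnum, hden, ← DiscAux.pathK_eq_upath G Y n x₀ xm]
  -- endpoint products nonneg etc
  have hq0 : 0 ≤ ∏ i : Fin (n+1), q i := Finset.prod_nonneg fun i _ => (hqp i).1
  have hqlep : ∏ i : Fin (n+1), q i ≤ ∏ i : Fin (n+1), p i :=
    Finset.prod_le_prod (fun i _ => (hqp i).1) (fun i _ => (hqp i).2.1)
  have hp0 : 0 ≤ ∏ i : Fin (n+1), p i :=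
    Finset.prod_nonneg fun i _ => le_trans (hqp i).1 (hqp i).2.1
  rw [hker]
  by_cases h36 : 1 ≤ 36 * ε ^ (1 / (2 * ((n+1 : ℕ) : ℝ)))
  · exact DiscAux.DISCge_trivial
      (fun x y => (DiscAux.pathK_mem G Y hYne hG01 n x y).1) hq0 hqlep (by exact_mod_cast h36)
  · push_neg at h36
    have hεb := DiscAux.eps_bound hε0 hε1 n (by exact_mod_cast h36)
    have main' : DISCge (X 0) (X (Fin.last (n+1))) (DiscAux.pathK G Y n)
        (∏ i : Fin (n+1), q i) (∏ i : Fin (n+1), p i) (ε + 2 * (n : ℝ) * Real.sqrt ε) := by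
      rw [← hY0, ← hYl, ← hprodq, ← hprodp]
      exact main
    exact DiscAux.DISCge_mono hp0 (by exact_mod_cast hεb) main'
end

section
/- Let H be a tree on vertices {1,…,m}. For every θ > 0 there exists ε > 0 (of size at least polynomial in θ) such that the following holds. Let G be a weighted graph with finite nonempty vertex subsets X₁,…,X_m such that for each edge ab of H, the pair (X_a, X_b)_G satisfies DISC_≥(q_{ab}, p_{ab}, ε) for some 0 ≤ q_{ab} ≤ p_{ab} ≤ 1. Then G(H) ≥ q(H) − θ p(H), where G(H) = E over compatible maps of ∏_{ab∈E(H)} G(x_a,x_b), q(H) = ∏_{ab∈E(H)} q_{ab}, and p(H) = ∏_{ab∈E(H)} p_{ab}. -/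
open Classical in
/-- The density of compatible weighted homomorphisms of `H` into the weighted graph `G`,
with vertex `i` of `H` landing in `X i`. -/
noncomputable def den {V : Type*} [Fintype V] {m : ℕ} (G : V → V → ℝ)
    (H : SimpleGraph (Fin m)) (X : Fin m → Finset V) : ℝ :=
  (∑ z ∈ Fintype.piFinset X, ∏ i : Fin m, ∏ j : Fin m,
      if i < j ∧ H.Adj i j then G (z i) (z j) else 1) /
    ∏ i : Fin m, ((X i).card : ℝ)

open Classical in
/-- `q(H) = ∏_{ij ∈ E(H)} q i j`. -/
noncomputable def qprod {m : ℕ} (q : Fin m → Fin m → ℝ) (H : SimpleGraph (Fin m)) : ℝ :=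
  ∏ i : Fin m, ∏ j : Fin m, if i < j ∧ H.Adj i j then q i j else 1

open Finset in
noncomputable def avg {V : Type} [Fintype V] {m : ℕ} (X : Fin m → Finset V)
    (f : (Fin m → V) → ℝ) : ℝ :=
  (∑ z ∈ Fintype.piFinset X, f z) / ∏ i, ((X i).card : ℝ)

section AvgLemmas
variable {V : Type} [Fintype V] {m : ℕ} (X : Fin m → Finset V)

lemma cardprod_pos (hX : ∀ i, (X i).Nonempty) : 0 < ∏ i, ((X i).card : ℝ) :=
  Finset.prod_pos fun i _ => by exact_mod_cast Finset.card_pos.2 (hX i)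

lemma avg_congr {f g : (Fin m → V) → ℝ} (h : ∀ z, f z = g z) : avg X f = avg X g := by
  unfold avg; rw [Finset.sum_congr rfl fun z _ => h z]

lemma key_update (j : Fin m) (f : (Fin m → V) → ℝ) :
    ∑ z ∈ Fintype.piFinset X, ∑ y ∈ X j, f (Function.update z j y)
      = (X j).card * ∑ z ∈ Fintype.piFinset X, f z := by
  classical
  have h1 : ∑ z ∈ Fintype.piFinset X, ∑ y ∈ X j, f (Function.update z j y)
      = ∑ p ∈ (Fintype.piFinset X) ×ˢ (X j), f (Function.update p.1 j p.2) := by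
    rw [Finset.sum_product]
  have h2 : ∑ p ∈ (Fintype.piFinset X) ×ˢ (X j), (fun p : (Fin m → V) × V => f p.1) p
      = ((X j).card : ℝ) * ∑ z ∈ Fintype.piFinset X, f z := by
    rw [Finset.sum_product]
    simp [Finset.sum_const, mul_comm, Finset.mul_sum]
  rw [h1, ← h2]
  apply Finset.sum_nbij' (i := fun p : (Fin m → V) × V => (Function.update p.1 j p.2, p.1 j))
    (j := fun p : (Fin m → V) × V => (Function.update p.1 j p.2, p.1 j))
  · rintro ⟨z, y⟩ hp
    simp only [Finset.mem_product, Fintype.mem_piFinset] at hp ⊢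
    refine ⟨fun a => ?_, hp.1 j⟩
    rcases eq_or_ne a j with rfl | ha
    · simpa using hp.2
    · simpa [Function.update_of_ne ha] using hp.1 a
  · rintro ⟨z, y⟩ hp
    simp only [Finset.mem_product, Fintype.mem_piFinset] at hp ⊢
    refine ⟨fun a => ?_, hp.1 j⟩
    rcases eq_or_ne a j with rfl | ha
    · simpa using hp.2
    · simpa [Function.update_of_ne ha] using hp.1 a
  · rintro ⟨z, y⟩ _
    simp [Function.update_idem, Function.update_eq_self]
  · rintro ⟨z, y⟩ _
    simp [Function.update_idem, Function.update_eq_self]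
  · rintro ⟨z, y⟩ _
    simp [Function.update_idem]

lemma avg_update (hX : ∀ i, (X i).Nonempty) (j : Fin m) (f : (Fin m → V) → ℝ) :
    avg X f = avg X (fun z => (∑ y ∈ X j, f (Function.update z j y)) / (X j).card) := by
  unfold avg
  rw [← Finset.sum_div, key_update]
  have hc : ((X j).card : ℝ) ≠ 0 := by
    exact_mod_cast Finset.card_pos.2 (hX j) |>.ne'
  rw [mul_div_cancel_left₀ _ hc]

lemma avg_single (hX : ∀ i, (X i).Nonempty) (i : Fin m) (g : V → ℝ) :
    avg X (fun z => g (z i)) = (∑ y ∈ X i, g y) / (X i).card := by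
  classical
  unfold avg
  have h1 : ∀ z : Fin m → V, g (z i) = ∏ i', (if i' = i then g (z i') else 1) := by
    intro z
    rw [Finset.prod_ite_eq' Finset.univ i (fun i' => g (z i'))]
    simp
  rw [Finset.sum_congr rfl fun z _ => h1 z,
      ← Finset.prod_univ_sum X (fun i' y => if i' = i then g y else (1:ℝ))]
  have h2 : ∀ i', (∑ y ∈ X i', if i' = i then g y else 1)
      = if i' = i then ∑ y ∈ X i, g y else ((X i').card : ℝ) := by
    intro i'
    by_cases h : i' = i
    · subst h; simp
    · simp [h]
  rw [Finset.prod_congr rfl fun i' _ => h2 i']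
  rw [← Finset.mul_prod_erase Finset.univ _ (Finset.mem_univ i),
      ← Finset.mul_prod_erase Finset.univ (fun i' => ((X i').card : ℝ)) (Finset.mem_univ i)]
  have h3 : ∏ i' ∈ Finset.univ.erase i, (if i' = i then ∑ y ∈ X i, g y else ((X i').card : ℝ))
      = ∏ i' ∈ Finset.univ.erase i, ((X i').card : ℝ) := by
    apply Finset.prod_congr rfl
    intro i' hi'
    simp [Finset.ne_of_mem_erase hi']
  rw [h3, if_pos rfl]
  have hP : (∏ i' ∈ Finset.univ.erase i, ((X i').card : ℝ)) ≠ 0 := by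
    apply ne_of_gt
    exact Finset.prod_pos fun i' _ => by exact_mod_cast Finset.card_pos.2 (hX i')
  have hc : ((X i).card : ℝ) ≠ 0 := by
    exact_mod_cast Finset.card_pos.2 (hX i) |>.ne'
  rw [mul_div_mul_comm, div_self hP, mul_one]

end AvgLemmas

section SumOut
variable {V : Type} [Fintype V] {m : ℕ} (X : Fin m → Finset V)

lemma avg_sumout (hX : ∀ i, (X i).Nonempty) (σ : Fin m → Fin m)
    (ψ : Fin m → V → V → ℝ) (S : Finset (Fin m)) :
    ∀ (Φ : (Fin m → V) → ℝ),
      (∀ j ∈ S, σ j ∉ S) →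
      (∀ j ∈ S, ∀ z y, Φ (Function.update z j y) = Φ z) →
      avg X (fun z => Φ z * ∏ j ∈ S, ψ j (z (σ j)) (z j))
        = avg X (fun z => Φ z * ∏ j ∈ S, (∑ y ∈ X j, ψ j (z (σ j)) y) / (X j).card) := by
  classical
  induction S using Finset.induction_on with
  | empty => intro Φ _ _; rfl
  | @insert a S ha ih =>
    intro Φ hσ hΦ
    have hσa : σ a ∉ insert a S := hσ a (Finset.mem_insert_self a S)
    have step := avg_update X hX a (fun z => Φ z * ∏ j ∈ insert a S, ψ j (z (σ j)) (z j))
    rw [step]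
    have heval : ∀ z : Fin m → V,
        (∑ y ∈ X a, (fun z => Φ z * ∏ j ∈ insert a S, ψ j (z (σ j)) (z j))
            (Function.update z a y)) / ((X a).card : ℝ)
        = (Φ z * ((∑ y ∈ X a, ψ a (z (σ a)) y) / ((X a).card : ℝ)))
            * ∏ j ∈ S, ψ j (z (σ j)) (z j) := by
      intro z
      have hterm : ∀ y : V,
          Φ (Function.update z a y) * ∏ j ∈ insert a S,
            ψ j ((Function.update z a y) (σ j)) ((Function.update z a y) j)
          = (Φ z * ∏ j ∈ S, ψ j (z (σ j)) (z j)) * ψ a (z (σ a)) y := by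
        intro y
        rw [hΦ a (Finset.mem_insert_self a S), Finset.prod_insert ha]
        have hne : σ a ≠ a := by
          intro h; exact hσa (by rw [h]; exact Finset.mem_insert_self a S)
        have h1 : (Function.update z a y) (σ a) = z (σ a) :=
          Function.update_of_ne hne _ _
        have h2 : (Function.update z a y) a = y := Function.update_self _ _ _
        have h3 : ∀ j ∈ S, ψ j ((Function.update z a y) (σ j)) ((Function.update z a y) j)
            = ψ j (z (σ j)) (z j) := by
          intro j hj
          have hj1 : σ j ≠ a := fun h =>
            hσ j (Finset.mem_insert_of_mem hj) (h ▸ Finset.mem_insert_self a S)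
          have hj2 : j ≠ a := fun h => ha (h ▸ hj)
          rw [Function.update_of_ne hj1, Function.update_of_ne hj2]
        rw [h1, h2, Finset.prod_congr rfl h3]
        ring
      rw [Finset.sum_congr rfl fun y _ => hterm y, ← Finset.mul_sum]
      rw [mul_div_assoc]
      ring
    rw [avg_congr X heval]
    rw [ih (fun z => Φ z * ((∑ y ∈ X a, ψ a (z (σ a)) y) / ((X a).card : ℝ)))
        (fun j hj => fun h => hσ j (Finset.mem_insert_of_mem hj) (Finset.mem_insert_of_mem h))
        ?_]
    · apply avg_congr
      intro z
      rw [Finset.prod_insert ha]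
      ring
    · intro j hj z y
      have h1 : σ a ≠ j := fun h => hσa (h ▸ Finset.mem_insert_of_mem hj)
      have h2 : (Function.update z j y) (σ a) = z (σ a) :=
        Function.update_of_ne h1 _ _
      simp only [hΦ j (Finset.mem_insert_of_mem hj), h2]

end SumOut

open Classical in
noncomputable def FF {V : Type} [Fintype V] {m : ℕ} (X : Fin m → Finset V) (G : V → V → ℝ)
    (r : Fin m) (par : Fin m → Fin m) : ℕ → Fin m → V → ℝ
  | 0, _, _ => 1
  | c+1, k, x => ∏ j ∈ Finset.univ.filter (fun j => j ≠ r ∧ par j = k),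
      (∑ y ∈ X j, G x y * FF X G r par c j y) / ((X j).card : ℝ)

open Classical in
noncomputable def QQ {m : ℕ} (qd : Fin m → ℝ) (r : Fin m) (par : Fin m → Fin m) :
    ℕ → Fin m → ℝ
  | 0, _ => 1
  | c+1, k => ∏ j ∈ Finset.univ.filter (fun j => j ≠ r ∧ par j = k),
      qd j * QQ qd r par c j

section FFLemmas
variable {V : Type} [Fintype V] {m : ℕ} (X : Fin m → Finset V) (G : V → V → ℝ)
  (r : Fin m) (par : Fin m → Fin m)

lemma FF_zero (k : Fin m) (x : V) : FF X G r par 0 k x = 1 := rfl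

open Classical in
lemma FF_succ (c : ℕ) (k : Fin m) (x : V) :
    FF X G r par (c+1) k x = ∏ j ∈ Finset.univ.filter (fun j => j ≠ r ∧ par j = k),
      (∑ y ∈ X j, G x y * FF X G r par c j y) / ((X j).card : ℝ) := rfl

lemma QQ_zero (qd : Fin m → ℝ) (k : Fin m) : QQ qd r par 0 k = 1 := rfl

open Classical in
lemma QQ_succ (qd : Fin m → ℝ) (c : ℕ) (k : Fin m) :
    QQ qd r par (c+1) k = ∏ j ∈ Finset.univ.filter (fun j => j ≠ r ∧ par j = k),
      qd j * QQ qd r par c j := rfl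

lemma FF_nonneg (hG : ∀ x y, 0 ≤ G x y ∧ G x y ≤ 1) :
    ∀ c k x, 0 ≤ FF X G r par c k x := by
  intro c
  induction c with
  | zero => intro k x; rw [FF_zero]; norm_num
  | succ c ih =>
    intro k x
    rw [FF_succ]
    apply Finset.prod_nonneg
    intro j _
    apply div_nonneg _ (by positivity)
    exact Finset.sum_nonneg fun y _ => mul_nonneg (hG x y).1 (ih j y)

lemma FF_le_one (hX : ∀ i, (X i).Nonempty) (hG : ∀ x y, 0 ≤ G x y ∧ G x y ≤ 1) :
    ∀ c k x, FF X G r par c k x ≤ 1 := by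
  intro c
  induction c with
  | zero => intro k x; rw [FF_zero]
  | succ c ih =>
    intro k x
    rw [FF_succ]
    apply Finset.prod_le_one
    · intro j _
      apply div_nonneg _ (by positivity)
      exact Finset.sum_nonneg fun y _ => mul_nonneg (hG x y).1 (FF_nonneg X G r par hG c j y)
    · intro j _
      rw [div_le_one (by exact_mod_cast Finset.card_pos.2 (hX j))]
      calc ∑ y ∈ X j, G x y * FF X G r par c j y
          ≤ ∑ y ∈ X j, 1 := Finset.sum_le_sum fun y _ =>
            mul_le_one₀ (hG x y).2 (FF_nonneg X G r par hG c j y) (ih j y)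
        _ = ((X j).card : ℝ) := by simp

lemma QQ_nonneg (qd : Fin m → ℝ) (hqd : ∀ j, 0 ≤ qd j) : ∀ c k, 0 ≤ QQ qd r par c k := by
  intro c
  induction c with
  | zero => intro k; rw [QQ_zero]; norm_num
  | succ c ih =>
    intro k
    rw [QQ_succ]
    exact Finset.prod_nonneg fun j _ => mul_nonneg (hqd j) (ih j)

end FFLemmas
section Telescope
variable {V : Type} [Fintype V] {m : ℕ} (X : Fin m → Finset V) (G : V → V → ℝ)
  (r : Fin m) (par : Fin m → Fin m) (dd : Fin m → ℕ)

open Classical Finset in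
lemma filter_split (h1 : dd r = 0) (h2 : ∀ j, j ≠ r → dd (par j) + 1 = dd j) (d : ℕ) :
    Finset.univ.filter (fun j : Fin m => j ≠ r ∧ dd j ≤ d+1)
      = Finset.univ.filter (fun j => j ≠ r ∧ dd j ≤ d)
        ∪ Finset.univ.filter (fun k => dd k = d+1) := by
  ext j
  simp only [Finset.mem_filter, Finset.mem_union, Finset.mem_univ, true_and]
  constructor
  · rintro ⟨hj, hd⟩
    by_cases h : dd j = d + 1
    · exact Or.inr h
    · exact Or.inl ⟨hj, by omega⟩
  · rintro (⟨hj, hd⟩ | hd)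
    · exact ⟨hj, by omega⟩
    · refine ⟨fun hjr => ?_, by omega⟩
      rw [hjr, h1] at hd; omega

open Classical Finset in
lemma filter_disj (d : ℕ) :
    Disjoint (Finset.univ.filter (fun j : Fin m => j ≠ r ∧ dd j ≤ d))
      (Finset.univ.filter (fun k => dd k = d+1)) := by
  rw [Finset.disjoint_left]
  intro j hj hj'
  simp only [Finset.mem_filter] at hj hj'
  omega

open Classical Finset in
lemma fiber_eq (h1 : dd r = 0) (h2 : ∀ j, j ≠ r → dd (par j) + 1 = dd j)
    {d : ℕ} {k : Fin m} (hk : dd k = d) :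
    (Finset.univ.filter (fun j : Fin m => dd j = d+1)).filter (fun j => par j = k)
      = Finset.univ.filter (fun j => j ≠ r ∧ par j = k) := by
  ext j
  simp only [Finset.mem_filter, Finset.mem_univ, true_and]
  constructor
  · rintro ⟨hd, hp⟩
    refine ⟨fun hjr => ?_, hp⟩
    rw [hjr, h1] at hd; omega
  · rintro ⟨hjr, hp⟩
    refine ⟨?_, hp⟩
    have := h2 j hjr
    rw [hp, hk] at this; omega

open Classical Finset in
lemma Tstep (hX : ∀ i, (X i).Nonempty)
    (h1 : dd r = 0) (h2 : ∀ j, j ≠ r → dd (par j) + 1 = dd j) (c d : ℕ) :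
    avg X (fun z => (∏ j ∈ Finset.univ.filter (fun j => j ≠ r ∧ dd j ≤ d+1),
          G (z (par j)) (z j))
        * ∏ k ∈ Finset.univ.filter (fun k => dd k = d+1), FF X G r par c k (z k))
    = avg X (fun z => (∏ j ∈ Finset.univ.filter (fun j => j ≠ r ∧ dd j ≤ d),
          G (z (par j)) (z j))
        * ∏ k ∈ Finset.univ.filter (fun k => dd k = d), FF X G r par (c+1) k (z k)) := by
  have hne0 : ∀ j : Fin m, dd j ≠ 0 → j ≠ r := by
    intro j hj hjr; rw [hjr, h1] at hj; exact hj rfl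
  have step1 : avg X (fun z => (∏ j ∈ Finset.univ.filter (fun j => j ≠ r ∧ dd j ≤ d+1),
          G (z (par j)) (z j))
        * ∏ k ∈ Finset.univ.filter (fun k => dd k = d+1), FF X G r par c k (z k))
      = avg X (fun z => (∏ j ∈ Finset.univ.filter (fun j => j ≠ r ∧ dd j ≤ d),
          G (z (par j)) (z j))
        * ∏ j ∈ Finset.univ.filter (fun j => dd j = d+1),
            (G (z (par j)) (z j) * FF X G r par c j (z j))) := by
    apply avg_congr
    intro z
    rw [filter_split r par dd h1 h2 d, Finset.prod_union (filter_disj r dd d),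
      Finset.prod_mul_distrib]
    ring
  rw [step1]
  have step2 := avg_sumout X hX par (fun j x y => G x y * FF X G r par c j y)
      (Finset.univ.filter (fun j => dd j = d+1))
      (fun z => ∏ j ∈ Finset.univ.filter (fun j => j ≠ r ∧ dd j ≤ d), G (z (par j)) (z j))
      ?_ ?_
  · rw [step2]
    apply avg_congr
    intro z
    congr 1
    have hmaps : ∀ j ∈ Finset.univ.filter (fun j : Fin m => dd j = d+1),
        par j ∈ Finset.univ.filter (fun k : Fin m => dd k = d) := by
      intro j hj
      simp only [Finset.mem_filter, Finset.mem_univ, true_and] at hj ⊢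
      have := h2 j (hne0 j (by omega))
      omega
    rw [← Finset.prod_fiberwise_of_maps_to hmaps
      (fun j => (∑ y ∈ X j, G (z (par j)) y * FF X G r par c j y) / ((X j).card : ℝ))]
    apply Finset.prod_congr rfl
    intro k hk
    simp only [Finset.mem_filter, Finset.mem_univ, true_and] at hk
    rw [FF_succ, ← fiber_eq r par dd h1 h2 hk]
    apply Finset.prod_congr rfl
    intro j hj
    simp only [Finset.mem_filter] at hj
    rw [hj.2]
  · intro j hj hpj
    simp only [Finset.mem_filter, Finset.mem_univ, true_and] at hj hpj
    have := h2 j (hne0 j (by omega))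
    omega
  · intro j hj z y
    simp only [Finset.mem_filter, Finset.mem_univ, true_and] at hj
    apply Finset.prod_congr rfl
    intro j' hj'
    simp only [Finset.mem_filter, Finset.mem_univ, true_and] at hj'
    have hd' := h2 j' hj'.1
    have hne1 : par j' ≠ j := by intro h; rw [h] at hd'; omega
    have hne2 : j' ≠ j := by intro h; rw [h] at hj'; omega
    rw [Function.update_of_ne hne1, Function.update_of_ne hne2]

lemma dd_iter (h1 : dd r = 0) (h2 : ∀ j, j ≠ r → dd (par j) + 1 = dd j) (j : Fin m) :
    ∀ i : ℕ, i ≤ dd j → dd (par^[i] j) = dd j - i := by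
  intro i
  induction i with
  | zero => simp
  | succ n ih =>
    intro h
    have hn := ih (by omega)
    have hne : par^[n] j ≠ r := by
      intro hr; rw [hr, h1] at hn; omega
    rw [Function.iterate_succ_apply']
    have := h2 _ hne
    omega

lemma dd_lt (h1 : dd r = 0) (h2 : ∀ j, j ≠ r → dd (par j) + 1 = dd j) (j : Fin m) :
    dd j < m := by
  have hinj : Function.Injective (fun i : Fin (dd j + 1) => par^[(i : ℕ)] j) := by
    intro i1 i2 h
    have e1 := dd_iter r par dd h1 h2 j i1 (by omega)
    have e2 := dd_iter r par dd h1 h2 j i2 (by omega)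
    simp only at h
    rw [h] at e1
    have : (i1 : ℕ) = (i2 : ℕ) := by omega
    exact Fin.ext this
  have := Fintype.card_le_of_injective _ hinj
  simpa using this

open Classical Finset in
lemma telescope (hX : ∀ i, (X i).Nonempty)
    (h1 : dd r = 0) (h2 : ∀ j, j ≠ r → dd (par j) + 1 = dd j) :
    avg X (fun z => ∏ j ∈ Finset.univ.filter (fun j => j ≠ r), G (z (par j)) (z j))
      = (∑ x ∈ X r, FF X G r par m r x) / ((X r).card : ℝ) := by
  have key : ∀ i, i ≤ m →
      avg X (fun z => (∏ j ∈ Finset.univ.filter (fun j => j ≠ r ∧ dd j ≤ m),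
          G (z (par j)) (z j))
        * ∏ k ∈ Finset.univ.filter (fun k => dd k = m), FF X G r par 0 k (z k))
      = avg X (fun z => (∏ j ∈ Finset.univ.filter (fun j => j ≠ r ∧ dd j ≤ m - i),
          G (z (par j)) (z j))
        * ∏ k ∈ Finset.univ.filter (fun k => dd k = m - i), FF X G r par i k (z k)) := by
    intro i
    induction i with
    | zero => intro _; simp
    | succ n ih =>
      intro h
      rw [ih (by omega)]
      have hm : m - n = (m - (n+1)) + 1 := by omega
      rw [hm]
      exact Tstep X G r par dd hX h1 h2 n (m - (n+1))
  have := key m le_rfl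
  simp only [Nat.sub_self] at this
  have lhs_eq : avg X (fun z => (∏ j ∈ Finset.univ.filter (fun j => j ≠ r ∧ dd j ≤ m),
          G (z (par j)) (z j))
        * ∏ k ∈ Finset.univ.filter (fun k => dd k = m), FF X G r par 0 k (z k))
      = avg X (fun z => ∏ j ∈ Finset.univ.filter (fun j => j ≠ r), G (z (par j)) (z j)) := by
    apply avg_congr
    intro z
    have e1 : Finset.univ.filter (fun j : Fin m => j ≠ r ∧ dd j ≤ m)
        = Finset.univ.filter (fun j => j ≠ r) := by
      ext j
      simp only [Finset.mem_filter, Finset.mem_univ, true_and]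
      exact ⟨fun h => h.1, fun h => ⟨h, (dd_lt r par dd h1 h2 j).le⟩⟩
    have e2 : ∏ k ∈ Finset.univ.filter (fun k : Fin m => dd k = m),
        FF X G r par 0 k (z k) = 1 :=
      Finset.prod_eq_one fun k _ => FF_zero X G r par k (z k)
    rw [e1, e2, mul_one]
  have rhs_eq : avg X (fun z => (∏ j ∈ Finset.univ.filter (fun j => j ≠ r ∧ dd j ≤ 0),
          G (z (par j)) (z j))
        * ∏ k ∈ Finset.univ.filter (fun k => dd k = 0), FF X G r par m k (z k))
      = (∑ x ∈ X r, FF X G r par m r x) / ((X r).card : ℝ) := by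
    have e1 : Finset.univ.filter (fun j : Fin m => j ≠ r ∧ dd j ≤ 0) = ∅ := by
      ext j
      simp only [Finset.mem_filter, Finset.mem_univ, true_and, Finset.notMem_empty,
        iff_false]
      rintro ⟨hj, hd⟩
      have := h2 j hj
      omega
    have e2 : Finset.univ.filter (fun k : Fin m => dd k = 0) = {r} := by
      ext k
      simp only [Finset.mem_filter, Finset.mem_univ, true_and, Finset.mem_singleton]
      constructor
      · intro hk
        by_contra hkr
        have := h2 k hkr
        omega
      · intro hk; rw [hk, h1]
    have e3 : avg X (fun z => (∏ j ∈ Finset.univ.filter (fun j => j ≠ r ∧ dd j ≤ 0),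
          G (z (par j)) (z j))
        * ∏ k ∈ Finset.univ.filter (fun k => dd k = 0), FF X G r par m k (z k))
        = avg X (fun z => FF X G r par m r (z r)) := by
      apply avg_congr
      intro z
      rw [e1, e2, Finset.prod_empty, Finset.prod_singleton, one_mul]
    rw [e3, avg_single X hX r (FF X G r par m r)]
  rw [← lhs_eq, this, rhs_eq]

open Classical Finset in
lemma qtelescope (hm : 0 < m) (qd : Fin m → ℝ)
    (h1 : dd r = 0) (h2 : ∀ j, j ≠ r → dd (par j) + 1 = dd j) :
    ∏ j ∈ Finset.univ.filter (fun j => j ≠ r), qd j = QQ qd r par m r := by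
  have key : ∀ i, i ≤ m →
      (∏ j ∈ Finset.univ.filter (fun j => j ≠ r ∧ dd j ≤ m), qd j)
        * ∏ k ∈ Finset.univ.filter (fun k => dd k = m), QQ qd r par 0 k
      = (∏ j ∈ Finset.univ.filter (fun j => j ≠ r ∧ dd j ≤ m - i), qd j)
        * ∏ k ∈ Finset.univ.filter (fun k => dd k = m - i), QQ qd r par i k := by
    intro i
    induction i with
    | zero => intro _; simp
    | succ n ih =>
      intro h
      rw [ih (by omega)]
      have hm' : m - n = (m - (n+1)) + 1 := by omega
      rw [hm']
      set d := m - (n+1) with hd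
      rw [filter_split r par dd h1 h2 d, Finset.prod_union (filter_disj r dd d)]
      have hmaps : ∀ j ∈ Finset.univ.filter (fun j : Fin m => dd j = d+1),
          par j ∈ Finset.univ.filter (fun k : Fin m => dd k = d) := by
        intro j hj
        simp only [Finset.mem_filter, Finset.mem_univ, true_and] at hj ⊢
        have hne : j ≠ r := by intro hr; rw [hr, h1] at hj; omega
        have := h2 j hne
        omega
      have regroup : (∏ j ∈ Finset.univ.filter (fun j : Fin m => dd j = d+1), qd j)
          * ∏ k ∈ Finset.univ.filter (fun j : Fin m => dd j = d+1), QQ qd r par n k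
          = ∏ k ∈ Finset.univ.filter (fun k : Fin m => dd k = d), QQ qd r par (n+1) k := by
        rw [← Finset.prod_mul_distrib,
          ← Finset.prod_fiberwise_of_maps_to hmaps (fun j => qd j * QQ qd r par n j)]
        apply Finset.prod_congr rfl
        intro k hk
        simp only [Finset.mem_filter, Finset.mem_univ, true_and] at hk
        rw [QQ_succ, ← fiber_eq r par dd h1 h2 hk]
      rw [mul_assoc, regroup]
  have := key m le_rfl
  simp only [Nat.sub_self] at this
  have e0 : ∏ k ∈ Finset.univ.filter (fun k : Fin m => dd k = m), QQ qd r par 0 k = 1 :=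
    Finset.prod_eq_one fun k _ => QQ_zero r par qd k
  have e1 : Finset.univ.filter (fun j : Fin m => j ≠ r ∧ dd j ≤ m)
      = Finset.univ.filter (fun j => j ≠ r) := by
    ext j
    simp only [Finset.mem_filter, Finset.mem_univ, true_and]
    exact ⟨fun h => h.1, fun h => ⟨h, (dd_lt r par dd h1 h2 j).le⟩⟩
  have e2 : Finset.univ.filter (fun j : Fin m => j ≠ r ∧ dd j ≤ 0) = ∅ := by
    ext j
    simp only [Finset.mem_filter, Finset.mem_univ, true_and, Finset.notMem_empty, iff_false]
    rintro ⟨hj, hd⟩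
    have := h2 j hj
    omega
  have e3 : Finset.univ.filter (fun k : Fin m => dd k = 0) = {r} := by
    ext k
    simp only [Finset.mem_filter, Finset.mem_univ, true_and, Finset.mem_singleton]
    constructor
    · intro hk
      by_contra hkr
      have := h2 k hkr
      omega
    · intro hk; rw [hk, h1]
  rw [e0, e1, e2, e3, Finset.prod_empty, Finset.prod_singleton, mul_one, one_mul] at this
  exact this

end Telescope
section BadSet
variable {V : Type} [Fintype V] {m : ℕ}

open Classical Finset in
lemma badset (X : Fin m → Finset V) (hX : ∀ i, (X i).Nonempty)
    (G : V → V → ℝ) (hG : ∀ x y, 0 ≤ G x y ∧ G x y ≤ 1)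
    (r : Fin m) (par : Fin m → Fin m)
    (qv pv : Fin m → ℝ)
    (hqp : ∀ j, j ≠ r → 0 ≤ qv j ∧ qv j ≤ pv j ∧ pv j ≤ 1)
    (δ ε : ℝ) (hδ : 0 < δ) (hε : 0 < ε) (hcond : 2*m*ε/δ ≤ δ/2)
    (hdisc : ∀ j, j ≠ r → DISCge (X (par j)) (X j) G (qv j) (pv j) ε) :
    ∀ c k, ∃ B : Finset V, B ⊆ X k ∧ ((B.card : ℝ) ≤ (2*m*ε/δ) * (X k).card) ∧
      ∀ x ∈ X k, x ∉ B →
        QQ (fun j => max (qv j - δ * pv j) 0) r par c k ≤ FF X G r par c k x := by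
  set qd : Fin m → ℝ := fun j => max (qv j - δ * pv j) 0 with hqd_def
  have hqd0 : ∀ j, 0 ≤ qd j := fun j => le_max_right _ _
  intro c
  induction c with
  | zero =>
    intro k
    refine ⟨∅, Finset.empty_subset _, ?_, ?_⟩
    · simp only [Finset.card_empty, Nat.cast_zero]
      positivity
    intro x _ _
    rw [QQ_zero, FF_zero]
  | succ c ih =>
    intro k
    choose B hB1 hB2 hB3 using ih
    set Bp : Fin m → Finset V := fun j =>
      (X k).filter (fun x => ∑ y ∈ X j \ B j, G x y < qd j * ((X j).card : ℝ)) with hBp_def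
    set CC : Finset (Fin m) := Finset.univ.filter (fun j => j ≠ r ∧ par j = k) with hCC_def
    have claim1 : ∀ j ∈ CC, ((Bp j).card : ℝ) ≤ (2*ε/δ) * (X k).card := by
      intro j hj
      rw [hCC_def, Finset.mem_filter] at hj
      obtain ⟨-, hjr, hjk⟩ := hj
      rcases le_or_gt (qv j - δ * pv j) 0 with ha | ha
      · have hBpe : Bp j = ∅ := by
          rw [hBp_def]
          ext x
          simp only [Finset.mem_filter, Finset.notMem_empty, iff_false, not_and, not_lt]
          intro _
          have h0 : qd j = 0 := max_eq_right ha
          rw [h0, zero_mul]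
          exact Finset.sum_nonneg fun y _ => (hG x y).1
        rw [hBpe]
        simp only [Finset.card_empty, Nat.cast_zero]
        positivity
      · have hqdv : qd j = qv j - δ * pv j := max_eq_left ha.le
        obtain ⟨hqv0, hqvpv, hpv1⟩ := hqp j hjr
        have hpv0 : 0 ≤ pv j := le_trans hqv0 hqvpv
        have hpv : 0 < pv j := by
          rcases hpv0.lt_or_eq with h | h
          · exact h
          · exfalso; nlinarith
        have hXk : (0:ℝ) < (X k).card := by exact_mod_cast Finset.card_pos.2 (hX k)
        have hXj : (0:ℝ) < (X j).card := by exact_mod_cast Finset.card_pos.2 (hX j)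
        have disc := hdisc j hjr
        rw [hjk] at disc
        have hdd := disc (fun x => if x ∈ Bp j then (1:ℝ) else 0)
          (fun y => if y ∈ X j \ B j then (1:ℝ) else 0)
          (fun x => by split <;> norm_num) (fun y => by split <;> norm_num)
        set Sfull := ∑ x ∈ X k, ∑ y ∈ X j, (G x y - qv j) *
          (if x ∈ Bp j then (1:ℝ) else 0) * (if y ∈ X j \ B j then (1:ℝ) else 0) with hSfull
        have hS : -(ε * pv j) * (((X k).card : ℝ) * ((X j).card : ℝ)) ≤ Sfull :=
          (le_div_iff₀ (by positivity)).mp hdd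
        -- rewrite Sfull
        have hrow : ∀ x, ∑ y ∈ X j, (G x y - qv j) *
            (if x ∈ Bp j then (1:ℝ) else 0) * (if y ∈ X j \ B j then (1:ℝ) else 0)
            = (if x ∈ Bp j then (1:ℝ) else 0) * ∑ y ∈ X j \ B j, (G x y - qv j) := by
          intro x
          rw [Finset.mul_sum]
          have : ∀ y ∈ X j, (G x y - qv j) * (if x ∈ Bp j then (1:ℝ) else 0) *
              (if y ∈ X j \ B j then (1:ℝ) else 0)
              = if y ∈ X j \ B j then (if x ∈ Bp j then (1:ℝ) else 0) * (G x y - qv j)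
                else 0 := by
            intro y _
            split <;> split <;> ring
          rw [Finset.sum_congr rfl this, Finset.sum_ite_mem,
            Finset.inter_eq_right.mpr Finset.sdiff_subset]
        have hSfull2 : Sfull = ∑ x ∈ Bp j, ∑ y ∈ X j \ B j, (G x y - qv j) := by
          rw [hSfull, Finset.sum_congr rfl fun x _ => hrow x]
          have : ∀ x ∈ X k, (if x ∈ Bp j then (1:ℝ) else 0) *
              ∑ y ∈ X j \ B j, (G x y - qv j)
              = if x ∈ Bp j then ∑ y ∈ X j \ B j, (G x y - qv j) else 0 := by
            intro x _; split <;> ring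
          rw [Finset.sum_congr rfl this, Finset.sum_ite_mem,
            Finset.inter_eq_right.mpr (Finset.filter_subset _ _)]
        have hBjcard : ((X j \ B j).card : ℝ) = ((X j).card : ℝ) - ((B j).card : ℝ) := by
          rw [Finset.card_sdiff_of_subset (hB1 j)]
          exact Nat.cast_sub (Finset.card_le_card (hB1 j))
        have hrowbound : ∀ x ∈ Bp j,
            ∑ y ∈ X j \ B j, (G x y - qv j) ≤ -(δ/2) * pv j * ((X j).card : ℝ) := by
          intro x hx
          rw [hBp_def, Finset.mem_filter] at hx
          have hsum : ∑ y ∈ X j \ B j, G x y < qd j * ((X j).card : ℝ) := hx.2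
          rw [Finset.sum_sub_distrib, Finset.sum_const, nsmul_eq_mul, hBjcard]
          have hBj2 : ((B j).card : ℝ) ≤ (δ/2) * ((X j).card : ℝ) := by
            have := hB2 j
            nlinarith
          nlinarith
        have hSle : Sfull ≤ ((Bp j).card : ℝ) * (-(δ/2) * pv j * ((X j).card : ℝ)) := by
          rw [hSfull2]
          calc ∑ x ∈ Bp j, ∑ y ∈ X j \ B j, (G x y - qv j)
              ≤ ∑ x ∈ Bp j, (-(δ/2) * pv j * ((X j).card : ℝ)) :=
                Finset.sum_le_sum hrowbound
            _ = ((Bp j).card : ℝ) * (-(δ/2) * pv j * ((X j).card : ℝ)) := by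
                rw [Finset.sum_const, nsmul_eq_mul]
        have hfinal : -(ε * pv j) * (((X k).card : ℝ) * ((X j).card : ℝ))
            ≤ ((Bp j).card : ℝ) * (-(δ/2) * pv j * ((X j).card : ℝ)) := le_trans hS hSle
        by_contra hcon
        push_neg at hcon
        have hP : (0:ℝ) < δ/2 * pv j * ((X j).card : ℝ) := by positivity
        have h6 : (2*ε/δ * ((X k).card : ℝ)) * (δ/2 * pv j * ((X j).card : ℝ))
            = ε * pv j * (((X k).card : ℝ) * ((X j).card : ℝ)) := by
          field_simp
        have h7 := mul_lt_mul_of_pos_right hcon hP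
        rw [h6] at h7
        nlinarith [hfinal, h7]
    have hBpsub : ∀ j, Bp j ⊆ X k := fun j => Finset.filter_subset _ _
    refine ⟨CC.biUnion Bp, Finset.biUnion_subset.mpr fun j _ => hBpsub j, ?_, ?_⟩
    · have h1 : ((CC.biUnion Bp).card : ℝ) ≤ ∑ j ∈ CC, ((Bp j).card : ℝ) := by
        exact_mod_cast Finset.card_biUnion_le
      have h2 : ∑ j ∈ CC, ((Bp j).card : ℝ) ≤ ∑ j ∈ CC, (2*ε/δ) * ((X k).card : ℝ) :=
        Finset.sum_le_sum claim1
      have h3 : ∑ j ∈ CC, (2*ε/δ) * ((X k).card : ℝ)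
          = (CC.card : ℝ) * ((2*ε/δ) * ((X k).card : ℝ)) := by
        rw [Finset.sum_const, nsmul_eq_mul]
      have h4 : (CC.card : ℝ) ≤ (m : ℝ) := by
        have : CC.card ≤ m := by
          calc CC.card ≤ Finset.univ.card := Finset.card_filter_le _ _
            _ = m := by simp
        exact_mod_cast this
      have h5 : (0:ℝ) ≤ (2*ε/δ) * ((X k).card : ℝ) := by positivity
      calc ((CC.biUnion Bp).card : ℝ) ≤ (CC.card : ℝ) * ((2*ε/δ) * ((X k).card : ℝ)) := by
            linarith
        _ ≤ (m : ℝ) * ((2*ε/δ) * ((X k).card : ℝ)) := by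
            exact mul_le_mul_of_nonneg_right h4 h5
        _ = (2*↑m*ε/δ) * ((X k).card : ℝ) := by ring
    · intro x hx hxB
      rw [FF_succ, QQ_succ]
      have hCCeq : Finset.univ.filter (fun j => j ≠ r ∧ par j = k) = CC := rfl
      apply Finset.prod_le_prod
      · intro j _
        exact mul_nonneg (hqd0 j) (QQ_nonneg r par qd hqd0 c j)
      · intro j hj
        have hjCC : j ∈ CC := by rw [← hCCeq]; exact hj
        have hXj : (0:ℝ) < (X j).card := by exact_mod_cast Finset.card_pos.2 (hX j)
        rw [le_div_iff₀ hXj]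
        have hxBp : x ∉ Bp j := fun h => hxB (Finset.mem_biUnion.mpr ⟨j, hjCC, h⟩)
        have hge : qd j * ((X j).card : ℝ) ≤ ∑ y ∈ X j \ B j, G x y := by
          by_contra hlt
          push_neg at hlt
          exact hxBp (by rw [hBp_def, Finset.mem_filter]; exact ⟨hx, hlt⟩)
        have hQQ0 : 0 ≤ QQ qd r par c j := QQ_nonneg r par qd hqd0 c j
        calc qd j * QQ qd r par c j * ((X j).card : ℝ)
            = QQ qd r par c j * (qd j * ((X j).card : ℝ)) := by ring
          _ ≤ QQ qd r par c j * ∑ y ∈ X j \ B j, G x y :=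
              mul_le_mul_of_nonneg_left hge hQQ0
          _ = ∑ y ∈ X j \ B j, QQ qd r par c j * G x y := by rw [Finset.mul_sum]
          _ ≤ ∑ y ∈ X j \ B j, G x y * FF X G r par c j y := by
              apply Finset.sum_le_sum
              intro y hy
              rw [Finset.mem_sdiff] at hy
              have := hB3 j y hy.1 hy.2
              calc QQ qd r par c j * G x y = G x y * QQ qd r par c j := by ring
                _ ≤ G x y * FF X G r par c j y :=
                    mul_le_mul_of_nonneg_left this (hG x y).1
          _ ≤ ∑ y ∈ X j, G x y * FF X G r par c j y := by
              apply Finset.sum_le_sum_of_subset_of_nonneg Finset.sdiff_subset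
              intro y _ _
              exact mul_nonneg (hG x y).1 (FF_nonneg X G r par hG c j y)

end BadSet
lemma prod_diff_le {m : ℕ} (δ : ℝ) (hδ : 0 ≤ δ) (a b cc : Fin m → ℝ) :
    ∀ S : Finset (Fin m),
      (∀ j ∈ S, 0 ≤ a j ∧ a j ≤ b j ∧ b j ≤ cc j ∧ cc j ≤ 1) →
      (∀ j ∈ S, b j - a j ≤ δ * cc j) →
      ∏ j ∈ S, b j - ∏ j ∈ S, a j ≤ δ * S.card * ∏ j ∈ S, cc j := by
  intro S
  induction S using Finset.induction_on with
  | empty => intro _ _; simp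
  | @insert j S hj ih =>
    intro hb hd
    have hbj := hb j (Finset.mem_insert_self j S)
    have hdj := hd j (Finset.mem_insert_self j S)
    have hb' : ∀ i ∈ S, 0 ≤ a i ∧ a i ≤ b i ∧ b i ≤ cc i ∧ cc i ≤ 1 :=
      fun i hi => hb i (Finset.mem_insert_of_mem hi)
    have hd' : ∀ i ∈ S, b i - a i ≤ δ * cc i := fun i hi => hd i (Finset.mem_insert_of_mem hi)
    have ihS := ih hb' hd'
    have hPa0 : 0 ≤ ∏ i ∈ S, a i := Finset.prod_nonneg fun i hi => (hb' i hi).1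
    have hPcc0 : 0 ≤ ∏ i ∈ S, cc i := Finset.prod_nonneg fun i hi =>
      le_trans (hb' i hi).1 (le_trans (hb' i hi).2.1 (hb' i hi).2.2.1)
    have hPale : ∏ i ∈ S, a i ≤ ∏ i ∈ S, cc i :=
      Finset.prod_le_prod (fun i hi => (hb' i hi).1)
        (fun i hi => le_trans (hb' i hi).2.1 (hb' i hi).2.2.1)
    have hbj0 : 0 ≤ b j := le_trans hbj.1 hbj.2.1
    have hccj0 : 0 ≤ cc j := le_trans hbj0 hbj.2.2.1
    rw [Finset.prod_insert hj, Finset.prod_insert hj, Finset.prod_insert hj,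
      Finset.card_insert_of_notMem hj]
    calc b j * ∏ i ∈ S, b i - a j * ∏ i ∈ S, a i
        = b j * (∏ i ∈ S, b i - ∏ i ∈ S, a i) + (b j - a j) * ∏ i ∈ S, a i := by ring
      _ ≤ b j * (δ * S.card * ∏ i ∈ S, cc i) + (δ * cc j) * ∏ i ∈ S, cc i := by
          apply add_le_add
          · exact mul_le_mul_of_nonneg_left ihS hbj0
          · apply mul_le_mul hdj hPale hPa0 (mul_nonneg hδ hccj0)
      _ ≤ cc j * (δ * S.card * ∏ i ∈ S, cc i) + (δ * cc j) * ∏ i ∈ S, cc i := by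
          apply add_le_add_left
          apply mul_le_mul_of_nonneg_right hbj.2.2.1
          positivity
      _ = δ * (S.card + 1) * (cc j * ∏ i ∈ S, cc i) := by ring
      _ = δ * ((S.card : ℕ) + 1 : ℕ) * (cc j * ∏ i ∈ S, cc i) := by push_cast; ring

open Classical Finset in
lemma abstract_main {V : Type} [Fintype V] {m : ℕ}
    (X : Fin m → Finset V) (hX : ∀ i, (X i).Nonempty)
    (G : V → V → ℝ) (hG : ∀ x y, 0 ≤ G x y ∧ G x y ≤ 1)
    (r : Fin m) (par : Fin m → Fin m) (dd : Fin m → ℕ)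
    (h1 : dd r = 0) (h2 : ∀ j, j ≠ r → dd (par j) + 1 = dd j)
    (qv pv : Fin m → ℝ)
    (hqp : ∀ j, j ≠ r → 0 ≤ qv j ∧ qv j ≤ pv j ∧ pv j ≤ 1)
    (δ ε : ℝ) (hδ : 0 < δ) (hε : 0 < ε) (hcond : 2*m*ε/δ ≤ δ/2)
    (hdisc : ∀ j, j ≠ r → DISCge (X (par j)) (X j) G (qv j) (pv j) ε) :
    (∏ j ∈ Finset.univ.filter (fun j => j ≠ r), qv j)
      - (δ*m + 2*m*ε/δ) * ∏ j ∈ Finset.univ.filter (fun j => j ≠ r), pv j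
      ≤ avg X (fun z => ∏ j ∈ Finset.univ.filter (fun j => j ≠ r), G (z (par j)) (z j)) := by
  have hm : 0 < m := r.pos
  set S := Finset.univ.filter (fun j : Fin m => j ≠ r) with hS
  set qd : Fin m → ℝ := fun j => max (qv j - δ * pv j) 0 with hqd_def
  have hqd0 : ∀ j, 0 ≤ qd j := fun j => le_max_right _ _
  have hqdpv : ∀ j ∈ S, qd j ≤ pv j := by
    intro j hj
    rw [hS, Finset.mem_filter] at hj
    obtain ⟨hqv0, hqvpv, hpv1⟩ := hqp j hj.2
    apply max_le _ (le_trans hqv0 hqvpv)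
    nlinarith
  have hpv0 : ∀ j ∈ S, 0 ≤ pv j := by
    intro j hj
    rw [hS, Finset.mem_filter] at hj
    obtain ⟨hqv0, hqvpv, _⟩ := hqp j hj.2
    exact le_trans hqv0 hqvpv
  have hPpv0 : 0 ≤ ∏ j ∈ S, pv j := Finset.prod_nonneg hpv0
  -- telescopes
  have htel := telescope X G r par dd hX h1 h2
  have hqtel := qtelescope r par dd hm qd h1 h2
  -- bad set at root
  obtain ⟨B, hB1, hB2, hB3⟩ := badset X hX G hG r par qv pv hqp δ ε hδ hε hcond hdisc m r
  have hXr : (0:ℝ) < (X r).card := by exact_mod_cast Finset.card_pos.2 (hX r)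
  have hQ := QQ_nonneg r par qd hqd0 m r
  -- Step A : lower bound the average
  have hsum : ((X r).card : ℝ) * QQ qd r par m r
      - ((2*m*ε/δ) * ((X r).card : ℝ)) * QQ qd r par m r
      ≤ ∑ x ∈ X r, FF X G r par m r x := by
    have hsub : ∑ x ∈ X r \ B, FF X G r par m r x ≤ ∑ x ∈ X r, FF X G r par m r x := by
      apply Finset.sum_le_sum_of_subset_of_nonneg Finset.sdiff_subset
      intro x _ _
      exact FF_nonneg X G r par hG m r x
    have hlow : ∑ x ∈ X r \ B, QQ qd r par m r ≤ ∑ x ∈ X r \ B, FF X G r par m r x := by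
      apply Finset.sum_le_sum
      intro x hx
      rw [Finset.mem_sdiff] at hx
      exact hB3 x hx.1 hx.2
    have hcardeq : ((X r \ B).card : ℝ) = ((X r).card : ℝ) - (B.card : ℝ) := by
      rw [Finset.card_sdiff_of_subset hB1]
      exact Nat.cast_sub (Finset.card_le_card hB1)
    have hconst : ∑ x ∈ X r \ B, QQ qd r par m r
        = (((X r).card : ℝ) - (B.card : ℝ)) * QQ qd r par m r := by
      rw [Finset.sum_const, nsmul_eq_mul, hcardeq]
    have hB2' : (B.card : ℝ) * QQ qd r par m r
        ≤ ((2*m*ε/δ) * ((X r).card : ℝ)) * QQ qd r par m r :=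
      mul_le_mul_of_nonneg_right (hB2) hQ
    nlinarith [hsub, hlow, hconst, hB2']
  have havg : QQ qd r par m r - (2*m*ε/δ) * QQ qd r par m r
      ≤ avg X (fun z => ∏ j ∈ S, G (z (par j)) (z j)) := by
    rw [htel, le_div_iff₀ hXr]
    nlinarith [hsum]
  -- compare QQ with products
  have hQeq : QQ qd r par m r = ∏ j ∈ S, qd j := hqtel.symm
  have hQle : QQ qd r par m r ≤ ∏ j ∈ S, pv j := by
    rw [hQeq]
    exact Finset.prod_le_prod (fun j _ => hqd0 j) hqdpv
  have hdiff : ∏ j ∈ S, qv j - ∏ j ∈ S, qd j ≤ δ * m * ∏ j ∈ S, pv j := by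
    have h := prod_diff_le δ hδ.le qd qv pv S ?_ ?_
    · have hcard : (S.card : ℝ) ≤ (m : ℝ) := by
        have : S.card ≤ m := by
          calc S.card ≤ Finset.univ.card := Finset.card_filter_le _ _
            _ = m := by simp
        exact_mod_cast this
      calc ∏ j ∈ S, qv j - ∏ j ∈ S, qd j ≤ δ * S.card * ∏ j ∈ S, pv j := h
        _ ≤ δ * m * ∏ j ∈ S, pv j := by
            apply mul_le_mul_of_nonneg_right _ hPpv0
            exact mul_le_mul_of_nonneg_left hcard hδ.le
    · intro j hj
      rw [hS, Finset.mem_filter] at hj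
      obtain ⟨hqv0, hqvpv, hpv1⟩ := hqp j hj.2
      refine ⟨hqd0 j, ?_, hqvpv, hpv1⟩
      apply max_le _ hqv0
      nlinarith [hpv0 j (by rw [hS, Finset.mem_filter]; exact hj)]
    · intro j hj
      have : qv j - δ * pv j ≤ qd j := le_max_left _ _
      linarith
  have h2m : 0 ≤ 2*(m:ℝ)*ε/δ := by positivity
  calc (∏ j ∈ S, qv j) - (δ*m + 2*m*ε/δ) * ∏ j ∈ S, pv j
      = (∏ j ∈ S, qv j - δ*m*∏ j ∈ S, pv j) - (2*m*ε/δ) * ∏ j ∈ S, pv j := by ring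
    _ ≤ ∏ j ∈ S, qd j - (2*m*ε/δ) * ∏ j ∈ S, pv j := by linarith [hdiff]
    _ = QQ qd r par m r - (2*m*ε/δ) * ∏ j ∈ S, pv j := by rw [hQeq]
    _ ≤ QQ qd r par m r - (2*m*ε/δ) * QQ qd r par m r := by nlinarith [hQle, h2m]
    _ ≤ avg X (fun z => ∏ j ∈ S, G (z (par j)) (z j)) := havg
section Graph
open SimpleGraph Walk

variable {W : Type} {G : SimpleGraph W}

lemma concat_isPath {u v w : W} (p : G.Walk u v) (hp : p.IsPath) (h : G.Adj v w)
    (hw : w ∉ p.support) : (p.concat h).IsPath := by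
  rw [← Walk.isPath_reverse_iff, Walk.reverse_concat]
  rw [Walk.cons_isPath_iff]
  refine ⟨hp.reverse, ?_⟩
  rw [Walk.support_reverse]
  simpa using hw

lemma dist_le_of_mem_support [DecidableEq W] {u v x : W} (p : G.Walk u v)
    (hx : x ∈ p.support) : G.dist u x ≤ p.length :=
  le_trans (SimpleGraph.dist_le (p.takeUntil x hx)) (Walk.length_takeUntil_le p hx)

lemma parent_exists (hconn : G.Connected) {r j : W} (hj : j ≠ r) :
    ∃ i, G.Adj i j ∧ G.dist r i + 1 = G.dist r j := by
  classical
  obtain ⟨p, hp, hlen⟩ := (hconn.preconnected r j).exists_path_of_dist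
  have hd0 : G.dist r j ≠ 0 := (hconn.pos_dist_of_ne (Ne.symm hj)).ne'
  have hnil : ¬ p.reverse.Nil := by
    rw [Walk.nil_iff_length_eq, Walk.length_reverse, hlen]
    exact hd0
  obtain ⟨i, hadj, q, hq⟩ := Walk.not_nil_iff.mp hnil
  refine ⟨i, hadj.symm, ?_⟩
  have hpq : p = q.reverse.concat hadj.symm := by
    have : p.reverse.reverse = (Walk.cons hadj q).reverse := by rw [← hq]
    rwa [Walk.reverse_reverse, Walk.reverse_cons] at this
  have hqlen : q.length + 1 = G.dist r j := by
    have := congrArg Walk.length hpq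
    rw [hlen] at this
    rw [Walk.length_concat, Walk.length_reverse] at this
    omega
  have hle : G.dist r i ≤ q.length := by
    have := SimpleGraph.dist_le q.reverse
    rwa [Walk.length_reverse] at this
  have htri : G.dist r j ≤ G.dist r i + 1 := by
    have h1 : G.dist i j ≤ 1 := by
      have := SimpleGraph.dist_le (Walk.cons hadj.symm Walk.nil)
      simpa using this
    calc G.dist r j ≤ G.dist r i + G.dist i j := hconn.dist_triangle
      _ ≤ G.dist r i + 1 := by omega
  omega


lemma lower_nbr_unique (hH : G.IsTree) {r i i' j : W}
    (h : G.Adj i j) (hd : G.dist r i + 1 = G.dist r j)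
    (h' : G.Adj i' j) (hd' : G.dist r i' + 1 = G.dist r j) : i = i' := by
  classical
  have hconn := hH.isConnected
  have build : ∀ (a : W), G.Adj a j → G.dist r a + 1 = G.dist r j →
      ∃ (p : G.Walk r a) (hadj : G.Adj a j), (p.concat hadj).IsPath := by
    intro a ha hda
    obtain ⟨p, hp, hlen⟩ := (hconn.preconnected r a).exists_path_of_dist
    have hjns : j ∉ p.support := by
      intro hmem
      have := dist_le_of_mem_support p hmem
      rw [hlen] at this
      omega
    exact ⟨p, ha, concat_isPath p hp ha hjns⟩
  obtain ⟨p, hadj, hP⟩ := build i h hd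
  obtain ⟨p', hadj', hP'⟩ := build i' h' hd'
  obtain ⟨w0, -, huniq⟩ := hH.existsUnique_path r j
  have heq : p.concat hadj = p'.concat hadj' := by
    rw [huniq _ hP, huniq _ hP']
  obtain ⟨hv, -⟩ := Walk.concat_inj heq
  exact hv

lemma adj_dist_ne (hH : G.IsTree) (r : W) {i j : W} (h : G.Adj i j) :
    G.dist r i ≠ G.dist r j := by
  classical
  intro hdd
  have hconn := hH.isConnected
  obtain ⟨p, hp, hlen⟩ := (hconn.preconnected r i).exists_path_of_dist
  obtain ⟨pj, hpj, hlenj⟩ := (hconn.preconnected r j).exists_path_of_dist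
  have hij : i ≠ j := h.ne
  have hjns : j ∉ p.support := by
    intro hmem
    have hsplit := Walk.take_spec p hmem
    have hlen2 := congrArg Walk.length hsplit
    rw [Walk.length_append] at hlen2
    have hdrop : 1 ≤ (p.dropUntil j hmem).length := by
      have := SimpleGraph.dist_le (p.dropUntil j hmem)
      have hpos := hconn.pos_dist_of_ne (Ne.symm hij)
      omega
    have htake := dist_le_of_mem_support (p.takeUntil j hmem) (Walk.end_mem_support _)
    have : G.dist r j ≤ (p.takeUntil j hmem).length := by
      exact le_trans (SimpleGraph.dist_le _) le_rfl
    omega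
  have hP : (p.concat h).IsPath := concat_isPath p hp h hjns
  obtain ⟨w0, -, huniq⟩ := hH.existsUnique_path r j
  have heq : p.concat h = pj := by rw [huniq _ hP, huniq _ hpj]
  have := congrArg Walk.length heq
  rw [Walk.length_concat, hlen, hlenj] at this
  omega

lemma classification (hH : G.IsTree) (r : W) (par : W → W)
    (hpar : ∀ j, j ≠ r → G.Adj (par j) j ∧ G.dist r (par j) + 1 = G.dist r j)
    {i j : W} (h : G.Adj i j) :
    (G.dist r i + 1 = G.dist r j ∧ par j = i)
      ∨ (G.dist r j + 1 = G.dist r i ∧ par i = j) := by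
  have hconn := hH.isConnected
  have hne := adj_dist_ne hH r h
  have htri1 : G.dist r j ≤ G.dist r i + 1 := by
    have h1 : G.dist i j ≤ 1 := by
      have := SimpleGraph.dist_le (Walk.cons h Walk.nil)
      simpa using this
    calc G.dist r j ≤ G.dist r i + G.dist i j := hconn.dist_triangle
      _ ≤ G.dist r i + 1 := by omega
  have htri2 : G.dist r i ≤ G.dist r j + 1 := by
    have h1 : G.dist j i ≤ 1 := by
      have := SimpleGraph.dist_le (Walk.cons h.symm Walk.nil)
      simpa using this
    calc G.dist r i ≤ G.dist r j + G.dist j i := hconn.dist_triangle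
      _ ≤ G.dist r j + 1 := by omega
  rcases Nat.lt_or_ge (G.dist r i) (G.dist r j) with hlt | hge
  · left
    have heq : G.dist r i + 1 = G.dist r j := by omega
    have hjr : j ≠ r := by
      intro hjr
      rw [hjr, SimpleGraph.dist_self] at heq
      omega
    obtain ⟨hadjp, hdp⟩ := hpar j hjr
    exact ⟨heq, lower_nbr_unique hH hadjp hdp h heq⟩
  · right
    have heq : G.dist r j + 1 = G.dist r i := by omega
    have hir : i ≠ r := by
      intro hir
      rw [hir, SimpleGraph.dist_self] at heq
      omega
    obtain ⟨hadjp, hdp⟩ := hpar i hir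
    exact ⟨heq, lower_nbr_unique hH hadjp hdp h.symm heq⟩

end Graph
open Classical in
lemma prod_edges {m : ℕ} (H : SimpleGraph (Fin m)) (r : Fin m) (par : Fin m → Fin m)
    (dd : Fin m → ℕ) (h1 : dd r = 0)
    (hpar : ∀ j, j ≠ r → H.Adj (par j) j ∧ dd (par j) + 1 = dd j)
    (hclass : ∀ i j, H.Adj i j →
      (dd i + 1 = dd j ∧ par j = i) ∨ (dd j + 1 = dd i ∧ par i = j))
    (A : Fin m → Fin m → ℝ) (hA : ∀ i j, A i j = A j i) :
    (∏ i : Fin m, ∏ j : Fin m, if i < j ∧ H.Adj i j then A i j else 1)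
      = ∏ j ∈ Finset.univ.filter (fun j => j ≠ r), A (par j) j := by
  have estep : (∏ i : Fin m, ∏ j : Fin m, if i < j ∧ H.Adj i j then A i j else 1)
      = ∏ p ∈ (Finset.univ ×ˢ Finset.univ).filter
          (fun p : Fin m × Fin m => p.1 < p.2 ∧ H.Adj p.1 p.2), A p.1 p.2 := by
    rw [Finset.prod_filter]
    exact (Finset.prod_product' Finset.univ Finset.univ
      (fun a b : Fin m => if a < b ∧ H.Adj a b then A a b else 1)).symm
  rw [estep]
  apply Finset.prod_nbij' (i := fun p : Fin m × Fin m => if dd p.1 < dd p.2 then p.2 else p.1)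
    (j := fun j : Fin m => if par j < j then (par j, j) else (j, par j))
  · rintro ⟨i, j⟩ hp
    dsimp only
    simp only [Finset.mem_filter, Finset.mem_product, Finset.mem_univ, true_and] at hp ⊢
    obtain ⟨hlt, hadj⟩ := hp
    rcases hclass i j hadj with ⟨hd, hpj⟩ | ⟨hd, hpi⟩
    · rw [if_pos (by omega)]
      intro hjr
      rw [hjr, h1] at hd
      omega
    · rw [if_neg (by omega)]
      intro hir
      rw [hir, h1] at hd
      omega
  · intro j hj
    simp only [Finset.mem_filter, Finset.mem_univ, true_and] at hj
    obtain ⟨hadj, hd⟩ := hpar j hj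
    have hne : par j ≠ j := by intro h; rw [h] at hd; omega
    by_cases hc : par j < j
    · rw [if_pos hc]
      simp only [Finset.mem_filter, Finset.mem_product, Finset.mem_univ, true_and]
      exact ⟨hc, hadj⟩
    · rw [if_neg hc]
      simp only [Finset.mem_filter, Finset.mem_product, Finset.mem_univ, true_and]
      exact ⟨lt_of_le_of_ne (not_lt.mp hc) (Ne.symm hne), hadj.symm⟩
  · rintro ⟨i, j⟩ hp
    dsimp only
    simp only [Finset.mem_filter, Finset.mem_product, Finset.mem_univ, true_and] at hp
    obtain ⟨hlt, hadj⟩ := hp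
    rcases hclass i j hadj with ⟨hd, hpj⟩ | ⟨hd, hpi⟩
    · have hX : (if dd i < dd j then j else i) = j := if_pos (by omega)
      rw [hX, hpj, if_pos hlt]
    · have hX : (if dd i < dd j then j else i) = i := if_neg (by omega)
      rw [hX, hpi, if_neg (not_lt.mpr hlt.le)]
  · intro j hj
    simp only [Finset.mem_filter, Finset.mem_univ, true_and] at hj
    obtain ⟨hadj, hd⟩ := hpar j hj
    by_cases hc : par j < j
    · rw [if_pos hc]
      dsimp only
      rw [if_pos (by omega)]
    · rw [if_neg hc]
      dsimp only
      rw [if_neg (by omega)]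
  · rintro ⟨i, j⟩ hp
    dsimp only
    simp only [Finset.mem_filter, Finset.mem_product, Finset.mem_univ, true_and] at hp
    obtain ⟨hlt, hadj⟩ := hp
    rcases hclass i j hadj with ⟨hd, hpj⟩ | ⟨hd, hpi⟩
    · have hX : (if dd i < dd j then j else i) = j := if_pos (by omega)
      rw [hX, hpj]
    · have hX : (if dd i < dd j then j else i) = i := if_neg (by omega)
      rw [hX, hpi, hA]

theorem stmt_17 {m : ℕ} (H : SimpleGraph (Fin m)) (hH : H.IsTree) :
    ∃ C r : ℝ, 0 < C ∧ 0 < r ∧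
      ∀ θ : ℝ, 0 < θ → θ ≤ 1 →
        ∃ ε : ℝ, 0 < ε ∧ C * θ ^ r ≤ ε ∧
          ∀ (V : Type) (_ : Fintype V) (X : Fin m → Finset V),
            (∀ i, (X i).Nonempty) →
            ∀ G : V → V → ℝ, (∀ x y, G x y = G y x) → (∀ x y, 0 ≤ G x y ∧ G x y ≤ 1) →
            ∀ q p : Fin m → Fin m → ℝ,
              (∀ i j, q i j = q j i) → (∀ i j, p i j = p j i) →
              (∀ i j, H.Adj i j → 0 ≤ q i j ∧ q i j ≤ p i j ∧ p i j ≤ 1) →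
              (∀ i j, H.Adj i j → DISCge (X i) (X j) G (q i j) (p i j) ε) →
              qprod q H - θ * qprod p H ≤ den G H X := by
  classical
  have hm : 0 < m := by
    have : Nonempty (Fin m) := hH.isConnected.nonempty
    obtain ⟨i⟩ := this
    exact i.pos
  have hmR : (1:ℝ) ≤ (m:ℝ) := by exact_mod_cast hm
  set r : Fin m := ⟨0, hm⟩ with hr
  refine ⟨1/(16*(m:ℝ)^3), 2, by positivity, by norm_num, ?_⟩
  intro θ hθ0 hθ1
  refine ⟨θ^2/(16*(m:ℝ)^3), by positivity, ?_, ?_⟩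
  · rw [show ((2:ℝ)) = ((2:ℕ):ℝ) by norm_num, Real.rpow_natCast]
    exact le_of_eq (by ring)
  · intro V _ X hX G hGsymm hG q p hqsymm hpsymm hbounds hdisc
    set dd : Fin m → ℕ := fun k => H.dist r k with hdd
    have hpe : ∀ j : Fin m, ∃ i, j ≠ r → (H.Adj i j ∧ dd i + 1 = dd j) := by
      intro j
      by_cases hj : j = r
      · exact ⟨r, fun h => absurd hj h⟩
      · obtain ⟨i, h⟩ := parent_exists hH.isConnected hj
        exact ⟨i, fun _ => h⟩
    choose par hpar' using hpe
    have hpar : ∀ j, j ≠ r → H.Adj (par j) j ∧ dd (par j) + 1 = dd j :=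
      fun j hj => hpar' j hj
    have h1 : dd r = 0 := SimpleGraph.dist_self
    have h2 : ∀ j, j ≠ r → dd (par j) + 1 = dd j := fun j hj => (hpar j hj).2
    have hclass : ∀ i j, H.Adj i j →
        (dd i + 1 = dd j ∧ par j = i) ∨ (dd j + 1 = dd i ∧ par i = j) := by
      intro i j hadj
      exact classification hH r par hpar hadj
    set δ : ℝ := θ/(2*m) with hδdef
    set ε : ℝ := θ^2/(16*(m:ℝ)^3) with hεdef
    have hδ : 0 < δ := by rw [hδdef]; positivity
    have hε : 0 < ε := by rw [hεdef]; positivity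
    have hmne : (m:ℝ) ≠ 0 := by positivity
    have hθne : θ ≠ 0 := hθ0.ne'
    have hcondeq : 2*(m:ℝ)*ε/δ = θ/(4*m) := by
      rw [hεdef, hδdef]
      field_simp
      ring
    have hcond : 2*(m:ℝ)*ε/δ ≤ δ/2 := by
      rw [hcondeq, hδdef]
      exact le_of_eq (by ring)
    set qv : Fin m → ℝ := fun j => q (par j) j with hqv
    set pv : Fin m → ℝ := fun j => p (par j) j with hpv
    have hqp : ∀ j, j ≠ r → 0 ≤ qv j ∧ qv j ≤ pv j ∧ pv j ≤ 1 := by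
      intro j hj
      exact hbounds (par j) j (hpar j hj).1
    have hdisc' : ∀ j, j ≠ r → DISCge (X (par j)) (X j) G (qv j) (pv j) ε := by
      intro j hj
      exact hdisc (par j) j (hpar j hj).1
    have main := abstract_main X hX G hG r par dd h1 h2 qv pv hqp δ ε hδ hε hcond hdisc'
    have hden : den G H X
        = avg X (fun z => ∏ j ∈ Finset.univ.filter (fun j => j ≠ r), G (z (par j)) (z j)) := by
      unfold den avg
      congr 1
      apply Finset.sum_congr rfl
      intro z _
      exact prod_edges H r par dd h1 hpar hclass (fun i j => G (z i) (z j))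
        (fun i j => hGsymm _ _)
    have hqprod : qprod q H = ∏ j ∈ Finset.univ.filter (fun j => j ≠ r), qv j := by
      unfold qprod
      exact prod_edges H r par dd h1 hpar hclass q hqsymm
    have hpprod : qprod p H = ∏ j ∈ Finset.univ.filter (fun j => j ≠ r), pv j := by
      unfold qprod
      exact prod_edges H r par dd h1 hpar hclass p hpsymm
    have hppos : 0 ≤ qprod p H := by
      rw [hpprod]
      apply Finset.prod_nonneg
      intro j hj
      rw [Finset.mem_filter] at hj
      obtain ⟨h0, hqle, -⟩ := hqp j hj.2
      exact le_trans h0 hqle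
    have hcoeff : δ*(m:ℝ) + 2*(m:ℝ)*ε/δ ≤ θ := by
      rw [hcondeq, hδdef]
      have e1 : θ/(2*(m:ℝ))*(m:ℝ) = θ/2 := by field_simp
      rw [e1]
      have e2 : θ/(4*(m:ℝ)) ≤ θ/4 := by
        apply div_le_div_of_nonneg_left hθ0.le (by norm_num)
        linarith
      linarith
    calc qprod q H - θ * qprod p H
        ≤ qprod q H - (δ*(m:ℝ) + 2*(m:ℝ)*ε/δ) * qprod p H := by nlinarith [hcoeff, hppos]
      _ ≤ den G H X := by
          rw [hden, hqprod, hpprod]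
          exact main
end
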